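/- arXiv:1807.09965 — 9 statements merged into one kernel-verified Lean document; each statement's English description precedes it below -/
import Mathlib

section
/- Every semicocycle {Γ_t}_{t≥0} ⊂ C(D, A) over a semigroup F ⊂ C(D) is jointly continuous on (0,∞) × D. Moreover, if F is jointly continuous on [0,∞) × D, then {Γ_t} is jointly continuous on [0,∞) × D. -/
open Filter Metric Set Topology

section Semiflow

variable {E : Type*} [MetricSpace E] {G : ℝ → E → E} {Ω : Set E}

lemma semiflow_id0
    (hm : ∀ t ≥ (0:ℝ), Set.MapsTo (G t) Ω Ω)
    (hsg : ∀ t ≥ (0:ℝ), ∀ s ≥ (0:ℝ), ∀ x ∈ Ω, G (t + s) x = G t (G s x))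
    (h0 : ∀ x ∈ Ω, Tendsto (fun t => G t x) (𝓝[>] (0:ℝ)) (𝓝 x))
    {x : E} (hx : x ∈ Ω) : G 0 x = x := by
  have h2 : Tendsto (fun t => G t (G 0 x)) (𝓝[>] (0:ℝ)) (𝓝 (G 0 x)) :=
    h0 _ (hm 0 le_rfl hx)
  have heq : (fun t => G t (G 0 x)) =ᶠ[𝓝[>] (0:ℝ)] fun t => G t x := by
    filter_upwards [self_mem_nhdsWithin] with t ht
    have h3 := hsg t (le_of_lt ht) 0 le_rfl x hx
    rw [add_zero] at h3
    exact h3.symm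
  exact tendsto_nhds_unique (Filter.Tendsto.congr' heq h2) (h0 x hx)


lemma semiflow_right
    (hm : ∀ t ≥ (0:ℝ), Set.MapsTo (G t) Ω Ω)
    (hsg : ∀ t ≥ (0:ℝ), ∀ s ≥ (0:ℝ), ∀ x ∈ Ω, G (t + s) x = G t (G s x))
    (h0 : ∀ x ∈ Ω, Tendsto (fun t => G t x) (𝓝[>] (0:ℝ)) (𝓝 x))
    {x : E} (hx : x ∈ Ω) {u : ℝ} (hu : 0 ≤ u) :
    Tendsto (fun w => G w x) (𝓝[≥] u) (𝓝 (G u x)) := by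
  have hz : G u x ∈ Ω := hm u hu hx
  have hA : Tendsto (fun s => G s (G u x)) (𝓝[≥] (0:ℝ)) (𝓝 (G u x)) := by
    have he : (𝓝[≥] (0:ℝ)) = pure 0 ⊔ 𝓝[>] (0:ℝ) := by
      rw [← Ioi_insert, nhdsWithin_insert]
    rw [he, tendsto_sup]
    constructor
    · have hid : G 0 (G u x) = G u x := semiflow_id0 hm hsg h0 hz
      have := tendsto_pure_nhds (fun s => G s (G u x)) 0
      rwa [hid] at this
    · exact h0 _ hz
  have hmap : Tendsto (fun w => w - u) (𝓝[≥] u) (𝓝[≥] (0:ℝ)) := by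
    rw [tendsto_nhdsWithin_iff]
    constructor
    · have : Tendsto (fun w : ℝ => w - u) (𝓝 u) (𝓝 (u - u)) :=
        (continuous_id.sub continuous_const).tendsto u
      rw [sub_self] at this
      exact this.mono_left nhdsWithin_le_nhds
    · filter_upwards [self_mem_nhdsWithin] with w hw
      exact sub_nonneg.2 (show u ≤ w from hw)
  have hcomp : Tendsto (fun w => G (w - u) (G u x)) (𝓝[≥] u) (𝓝 (G u x)) := hA.comp hmap
  apply hcomp.congr'
  filter_upwards [self_mem_nhdsWithin] with w hw
  have h3 := hsg (w - u) (sub_nonneg.2 hw) u hu x hx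
  rw [sub_add_cancel] at h3
  exact h3.symm


lemma semiflow_left_dense
    (hright : ∀ x ∈ Ω, ∀ u ≥ (0:ℝ), Tendsto (fun w => G w x) (𝓝[≥] u) (𝓝 (G u x)))
    {x : E} (hx : x ∈ Ω) {p q : ℝ} (hp : 0 ≤ p) (hpq : p < q) :
    ∃ v, p < v ∧ v ≤ q ∧ Tendsto (fun w => G w x) (𝓝[<] v) (𝓝 (G v x)) := by
  set f : ℝ → E := fun w => G w x with hf
  haveI : CompleteSpace ↥(Icc p q) := (isClosed_Icc : IsClosed (Icc p q)).completeSpace_coe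
  -- the sets T n k  (subsets of the subtype)
  set T : ℕ → ℕ → Set ↥(Icc p q) := fun n k =>
    {u | ∀ s ∈ Icc (0:ℝ) (1/(n+1)), dist (f (↑u + s)) (f ↑u) ≤ 1/(k+1)} with hT
  -- closures cover
  have hTcov : ∀ k, (⋃ n, closure (T n k)) = univ := by
    intro k
    apply eq_univ_of_forall
    intro u
    have hu0 : (0:ℝ) ≤ ↑u := le_trans hp u.2.1
    have hr := hright x hx ↑u hu0
    rw [Metric.tendsto_nhds] at hr
    have hk : (0:ℝ) < 1/(k+1) := by positivity
    have hev := hr _ hk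
    rw [eventually_nhdsWithin_iff] at hev
    rw [Metric.eventually_nhds_iff] at hev
    obtain ⟨δ, hδ, hδP⟩ := hev
    obtain ⟨n, hn⟩ := exists_nat_one_div_lt (show (0:ℝ) < δ/2 by positivity)
    refine mem_iUnion.2 ⟨n, subset_closure ?_⟩
    intro s hs
    have h1 : dist (↑u + s) (↑u : ℝ) < δ := by
      rw [Real.dist_eq]
      have : |s| = s := abs_of_nonneg hs.1
      rw [add_sub_cancel_left, this]
      calc s ≤ 1/(n+1) := hs.2
        _ < δ/2 := hn
        _ < δ := by linarith
    have h2 : (↑u : ℝ) ≤ ↑u + s := by linarith [hs.1]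
    exact le_of_lt (hδP h1 h2)
  -- dense Gδ of good points
  have hU : ∀ k : ℕ, Dense (⋃ n, interior (closure (T n k))) := fun k =>
    dense_iUnion_interior_of_closed (fun n => isClosed_closure) (hTcov k)
  have hG : Dense (⋂ k, ⋃ n, interior (closure (T n k))) :=
    dense_iInter_of_isOpen (fun k => isOpen_iUnion fun n => isOpen_interior) hU
  -- pick v with p < v
  have hqmem : q ∈ Icc p q := ⟨le_of_lt hpq, le_rfl⟩
  have hOopen : IsOpen {u : ↥(Icc p q) | p < ↑u} :=
    isOpen_induced_iff.2 ⟨Ioi p, isOpen_Ioi, rfl⟩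
  obtain ⟨v, hvG, hvO⟩ := hG.exists_mem_open hOopen ⟨⟨q, hqmem⟩, hpq⟩
  refine ⟨↑v, hvO, v.2.2, ?_⟩
  -- left continuity at v
  rw [Metric.tendsto_nhds]
  intro ε hε
  obtain ⟨k, hk⟩ := exists_nat_one_div_lt (show (0:ℝ) < ε/2 by positivity)
  obtain ⟨n, hn⟩ := mem_iUnion.1 (mem_iInter.1 hvG k)
  rw [mem_interior_iff_mem_nhds, Metric.mem_nhds_iff] at hn
  obtain ⟨η, hη, hball⟩ := hn
  set h₀ : ℝ := min η (min (1/(n+1)) (↑v - p)) with hh₀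
  have hh₀pos : 0 < h₀ := by
    apply lt_min hη
    apply lt_min (by positivity)
    exact sub_pos.2 hvO
  have hmem : Ioo (↑v - h₀) (↑v : ℝ) ∈ 𝓝[<] (↑v : ℝ) :=
    Ioo_mem_nhdsLT_of_mem ⟨by linarith, le_rfl⟩
  filter_upwards [hmem] with w hw
  -- find a point of T n k in (↑v - h₀, w)
  have hwv : w < ↑v := hw.2
  have hwl : ↑v - h₀ < w := hw.1
  -- midpoint z
  set z : ℝ := ((↑v - h₀) + w)/2 with hz
  have hz1 : ↑v - h₀ < z := by simp only [hz]; linarith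
  have hz2 : z < w := by simp only [hz]; linarith
  have hzmem : z ∈ Icc p q := by
    constructor
    · have : h₀ ≤ ↑v - p := le_trans (min_le_right _ _) (min_le_right _ _)
      linarith
    · have : w ≤ q := le_of_lt (lt_of_lt_of_le hwv v.2.2)
      linarith
  have hzball : (⟨z, hzmem⟩ : ↥(Icc p q)) ∈ Metric.ball v η := by
    rw [Metric.mem_ball, Subtype.dist_eq, Real.dist_eq, abs_of_nonpos (by simp; linarith)]
    have : h₀ ≤ η := min_le_left _ _
    simp only
    linarith
  have hzcl : (⟨z, hzmem⟩ : ↥(Icc p q)) ∈ closure (T n k) := hball hzball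
  rw [Metric.mem_closure_iff] at hzcl
  obtain ⟨u', hu'T, hu'd⟩ := hzcl (min (z - (↑v - h₀)) (w - z)) (by apply lt_min <;> linarith)
  rw [Subtype.dist_eq, Real.dist_eq] at hu'd
  have hu'low : ↑v - h₀ < ↑u' := by
    have h4 := abs_lt.1 hu'd
    have := min_le_left (z - (↑v - h₀)) (w - z)
    linarith [h4.2]
  have hu'high : ↑u' < w := by
    have h4 := abs_lt.1 hu'd
    have := min_le_right (z - (↑v - h₀)) (w - z)
    linarith [h4.1]
  have hbound : h₀ ≤ 1/(n+1) := le_trans (min_le_right _ _) (min_le_left _ _)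
  -- apply T property twice
  have happ : ∀ s ∈ Icc (0:ℝ) (1/(n+1)), dist (f (↑u' + s)) (f ↑u') ≤ 1/(k+1) := hu'T
  have h5 : dist (f w) (f ↑u') ≤ 1/(k+1) := by
    have := happ (w - ↑u') ⟨by linarith, by linarith⟩
    rwa [add_sub_cancel] at this
  have h6 : dist (f ↑v) (f ↑u') ≤ 1/(k+1) := by
    have := happ (↑v - ↑u') ⟨by linarith, by linarith⟩
    rwa [add_sub_cancel] at this
  calc dist (f w) (f ↑v) ≤ dist (f w) (f ↑u') + dist (f ↑u') (f ↑v) := dist_triangle _ _ _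
    _ = dist (f w) (f ↑u') + dist (f ↑v) (f ↑u') := by rw [dist_comm (f ↑v)]
    _ ≤ 1/(k+1) + 1/(k+1) := add_le_add h5 h6
    _ < ε/2 + ε/2 := by linarith
    _ = ε := by ring


lemma semiflow_left
    (hm : ∀ t ≥ (0:ℝ), Set.MapsTo (G t) Ω Ω)
    (hcont : ∀ t ≥ (0:ℝ), ContinuousOn (G t) Ω)
    (hsg : ∀ t ≥ (0:ℝ), ∀ s ≥ (0:ℝ), ∀ x ∈ Ω, G (t + s) x = G t (G s x))
    (hright : ∀ x ∈ Ω, ∀ u ≥ (0:ℝ), Tendsto (fun w => G w x) (𝓝[≥] u) (𝓝 (G u x)))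
    {x : E} (hx : x ∈ Ω) {u : ℝ} (hu : 0 < u) :
    Tendsto (fun w => G w x) (𝓝[<] u) (𝓝 (G u x)) := by
  obtain ⟨v, hv1, hv2, hvt⟩ := semiflow_left_dense hright hx
    (show (0:ℝ) ≤ u/2 by positivity) (show u/2 < 3*u/4 by linarith)
  have hv0 : 0 < v := lt_of_le_of_lt (by positivity : (0:ℝ) ≤ u/2) hv1
  set s : ℝ := u - v with hs
  have hs0 : 0 < s := by simp only [hs]; linarith
  have hsu : s < u := by simp only [hs]; linarith
  have hz : G v x ∈ Ω := hm v hv0.le hx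
  -- inner map w ↦ w - s tends within Iio
  have hmap : Tendsto (fun w : ℝ => w - s) (𝓝[<] u) (𝓝[<] v) := by
    rw [tendsto_nhdsWithin_iff]
    constructor
    · have h1 : Tendsto (fun w : ℝ => w - s) (𝓝 u) (𝓝 (u - s)) :=
        (continuous_id.sub continuous_const).tendsto u
      have : u - s = v := by simp [hs]
      rw [this] at h1
      exact h1.mono_left nhdsWithin_le_nhds
    · filter_upwards [self_mem_nhdsWithin] with w hw
      simp only [mem_Iio] at hw ⊢
      linarith
  have hinner : Tendsto (fun w : ℝ => G (w - s) x) (𝓝[<] u) (𝓝[Ω] (G v x)) := by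
    rw [tendsto_nhdsWithin_iff]
    refine ⟨hvt.comp hmap, ?_⟩
    have hev : ∀ᶠ w in 𝓝[<] u, s < w :=
      ((eventually_gt_nhds hsu).filter_mono nhdsWithin_le_nhds)
    filter_upwards [hev] with w hw
    exact hm _ (by linarith) hx
  have houter : Tendsto (G s) (𝓝[Ω] (G v x)) (𝓝 (G s (G v x))) := hcont s hs0.le (G v x) hz
  have hcomp := houter.comp hinner
  have hval : G s (G v x) = G u x := by
    rw [← hsg s hs0.le v hv0.le x hx]
    congr 1
    simp [hs]
  rw [hval] at hcomp
  apply hcomp.congr'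
  have hev : ∀ᶠ w in 𝓝[<] u, s < w :=
    ((eventually_gt_nhds hsu).filter_mono nhdsWithin_le_nhds)
  filter_upwards [hev] with w hw
  have h3 := hsg s hs0.le (w - s) (by linarith) x hx
  rw [add_sub_cancel] at h3
  exact h3.symm


lemma semiflow_orbit
    (hm : ∀ t ≥ (0:ℝ), Set.MapsTo (G t) Ω Ω)
    (hcont : ∀ t ≥ (0:ℝ), ContinuousOn (G t) Ω)
    (hsg : ∀ t ≥ (0:ℝ), ∀ s ≥ (0:ℝ), ∀ x ∈ Ω, G (t + s) x = G t (G s x))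
    (hright : ∀ x ∈ Ω, ∀ u ≥ (0:ℝ), Tendsto (fun w => G w x) (𝓝[≥] u) (𝓝 (G u x)))
    {x : E} (hx : x ∈ Ω) :
    ContinuousOn (fun w => G w x) (Ici 0) := by
  intro u hu
  rcases eq_or_lt_of_le (show (0:ℝ) ≤ u from hu) with h | h
  · rw [ContinuousWithinAt, ← h]
    exact hright x hx 0 le_rfl
  · have hat : ContinuousAt (fun w => G w x) u := by
      rw [ContinuousAt, ← nhdsLT_sup_nhdsGE u, tendsto_sup]
      exact ⟨semiflow_left hm hcont hsg hright hx h, hright x hx u h.le⟩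
    exact hat.continuousWithinAt


lemma semiflow_joint
    (hm : ∀ t ≥ (0:ℝ), Set.MapsTo (G t) Ω Ω)
    (hcont : ∀ t ≥ (0:ℝ), ContinuousOn (G t) Ω)
    (hsg : ∀ t ≥ (0:ℝ), ∀ s ≥ (0:ℝ), ∀ x ∈ Ω, G (t + s) x = G t (G s x))
    (h0 : ∀ x ∈ Ω, Tendsto (fun t => G t x) (𝓝[>] (0:ℝ)) (𝓝 x))
    (hright : ∀ x ∈ Ω, ∀ u ≥ (0:ℝ), Tendsto (fun w => G w x) (𝓝[≥] u) (𝓝 (G u x))) :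
    ContinuousOn (fun P : ℝ × E => G P.1 P.2) (Ioi (0:ℝ) ×ˢ Ω) := by
  rintro ⟨t₀, x₀⟩ hP
  obtain ⟨ht₀, hx₀⟩ : t₀ ∈ Ioi (0:ℝ) ∧ x₀ ∈ Ω := hP
  rw [mem_Ioi] at ht₀
  haveI : CompleteSpace ↥(Icc (0:ℝ) t₀) := (isClosed_Icc : IsClosed (Icc (0:ℝ) t₀)).completeSpace_coe
  -- the closed sets C N k
  set C : ℕ → ℕ → Set ↥(Icc (0:ℝ) t₀) := fun N k =>
    {u | ∀ y ∈ Ω, dist y x₀ ≤ 1/(N+1) → dist (G ↑u y) (G ↑u x₀) ≤ 1/(k+1)} with hC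
  have horb : ∀ y ∈ Ω, Continuous fun u : ↥(Icc (0:ℝ) t₀) => G ↑u y := by
    intro y hy
    exact ContinuousOn.comp_continuous (semiflow_orbit hm hcont hsg hright hy)
      continuous_subtype_val (fun u => u.2.1)
  have hCclosed : ∀ N k, IsClosed (C N k) := by
    intro N k
    have hrw : C N k = ⋂ (y : E), ⋂ (_ : y ∈ Ω ∧ dist y x₀ ≤ 1/(N+1)),
        {u : ↥(Icc (0:ℝ) t₀) | dist (G ↑u y) (G ↑u x₀) ≤ 1/(k+1)} := by
      ext u
      simp only [hC, mem_setOf_eq, mem_iInter]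
      constructor
      · intro h y hy; exact h y hy.1 hy.2
      · intro h y hy hd; exact h y ⟨hy, hd⟩
    rw [hrw]
    refine isClosed_iInter fun y => isClosed_iInter fun hy => ?_
    exact isClosed_le ((horb y hy.1).dist (horb x₀ hx₀)) continuous_const
  have hCcov : ∀ k, (⋃ N, C N k) = univ := by
    intro k
    apply eq_univ_of_forall
    intro u
    have hu0 : (0:ℝ) ≤ ↑u := u.2.1
    have hc := hcont ↑u hu0 x₀ hx₀
    rw [Metric.continuousWithinAt_iff] at hc
    obtain ⟨δ, hδ, hδP⟩ := hc _ (show (0:ℝ) < 1/(k+1) by positivity)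
    obtain ⟨N, hN⟩ := exists_nat_one_div_lt hδ
    refine mem_iUnion.2 ⟨N, ?_⟩
    intro y hy hd
    exact le_of_lt (hδP hy (lt_of_le_of_lt hd hN))
  have hU : ∀ k : ℕ, Dense (⋃ N, interior (C N k)) := fun k =>
    dense_iUnion_interior_of_closed (fun N => hCclosed N k) (hCcov k)
  have hG : Dense (⋂ k, ⋃ N, interior (C N k)) :=
    dense_iInter_of_isOpen (fun k => isOpen_iUnion fun N => isOpen_interior) hU
  -- pick m* strictly inside (0, t₀)
  have hOopen : IsOpen {u : ↥(Icc (0:ℝ) t₀) | (↑u:ℝ) ∈ Ioo 0 t₀} :=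
    isOpen_Ioo.preimage continuous_subtype_val
  have hOne : ({u : ↥(Icc (0:ℝ) t₀) | (↑u:ℝ) ∈ Ioo 0 t₀}).Nonempty :=
    ⟨⟨t₀/2, ⟨by positivity, by linarith⟩⟩, ⟨by positivity, by linarith⟩⟩
  obtain ⟨m, hmG, hm0, hmt⟩ : ∃ m : ↥(Icc (0:ℝ) t₀), m ∈ (⋂ k, ⋃ N, interior (C N k)) ∧
      0 < (↑m:ℝ) ∧ (↑m:ℝ) < t₀ := by
    obtain ⟨m, h1, h2⟩ := hG.exists_mem_open hOopen hOne
    exact ⟨m, h1, h2.1, h2.2⟩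
  set c : ℝ := t₀ - ↑m with hc'
  have hcpos : 0 < c := by simp only [hc']; linarith
  -- the auxiliary map ψ
  set ψ : ℝ × E → E := fun P => G (P.1 - c) P.2 with hψ
  -- eventualities in the within filter
  set l : Filter (ℝ × E) := 𝓝[Ioi (0:ℝ) ×ˢ Ω] (t₀, x₀) with hl
  have hfst : Tendsto (fun P : ℝ × E => P.1) l (𝓝 t₀) :=
    (continuous_fst.tendsto _).mono_left nhdsWithin_le_nhds
  have hsnd : Tendsto (fun P : ℝ × E => P.2) l (𝓝 x₀) :=
    (continuous_snd.tendsto _).mono_left nhdsWithin_le_nhds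
  have hmemS : ∀ᶠ P : ℝ × E in l, P.1 ∈ Ioi (0:ℝ) ∧ P.2 ∈ Ω := by
    filter_upwards [self_mem_nhdsWithin] with P hP using ⟨hP.1, hP.2⟩
  have hu_event : ∀ r > (0:ℝ), ∀ᶠ P : ℝ × E in l, |P.1 - c - ↑m| < r := by
    intro r hr
    have : ∀ᶠ w in 𝓝 t₀, |w - c - ↑m| < r := by
      have hcm : t₀ - c - ↑m = 0 := by simp [hc']
      have hcont2 : Tendsto (fun w : ℝ => |w - c - ↑m|) (𝓝 t₀) (𝓝 |t₀ - c - ↑m|) :=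
        ((continuous_id.sub continuous_const).sub continuous_const).abs.tendsto t₀
      rw [hcm, abs_zero] at hcont2
      exact hcont2.eventually (eventually_lt_nhds hr)  -- maybe name issue
    exact hfst.eventually this
  -- ψ tends to G m x₀ within Ω
  have hψt : Tendsto ψ l (𝓝[Ω] (G ↑m x₀)) := by
    rw [tendsto_nhdsWithin_iff]
    constructor
    · rw [Metric.tendsto_nhds]
      intro ε hε
      obtain ⟨k, hk⟩ := exists_nat_one_div_lt (show (0:ℝ) < ε/2 by positivity)
      obtain ⟨N, hN⟩ := mem_iUnion.1 (mem_iInter.1 hmG k)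
      rw [mem_interior_iff_mem_nhds, Metric.mem_nhds_iff] at hN
      obtain ⟨η, hη, hball⟩ := hN
      -- orbit continuity at m
      have horbx₀ : ContinuousAt (fun w => G w x₀) ↑m := by
        have h1 : Ici (0:ℝ) ∈ 𝓝 (↑m:ℝ) := Ici_mem_nhds hm0
        exact (semiflow_orbit hm hcont hsg hright hx₀).continuousAt h1
      rw [Metric.continuousAt_iff] at horbx₀
      obtain ⟨δ₂, hδ₂, hδ₂P⟩ := horbx₀ _ (show (0:ℝ) < ε/2 by positivity)
      set r : ℝ := min η (min δ₂ (min (↑m) (t₀ - ↑m))) with hr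
      have hrpos : 0 < r := by
        refine lt_min hη (lt_min hδ₂ (lt_min hm0 ?_))
        linarith
      filter_upwards [hu_event r hrpos, hmemS,
        (Metric.tendsto_nhds.1 hsnd) _ (show (0:ℝ) < 1/(N+1) by positivity)] with P hPu hPS hPd
      set u : ℝ := P.1 - c with hu'
      have habs := abs_lt.1 hPu
      have hu0 : 0 < u := by
        have : r ≤ ↑m := le_trans (min_le_right _ _) (le_trans (min_le_right _ _) (min_le_left _ _))
        simp only [hu'] at habs ⊢; linarith [habs.1]
      have hut : u < t₀ := by
        have : r ≤ t₀ - ↑m := le_trans (min_le_right _ _) (le_trans (min_le_right _ _) (min_le_right _ _))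
        simp only [hu'] at habs ⊢; linarith [habs.2]
      have humem : u ∈ Icc (0:ℝ) t₀ := ⟨hu0.le, hut.le⟩
      have hballmem : (⟨u, humem⟩ : ↥(Icc (0:ℝ) t₀)) ∈ Metric.ball m η := by
        rw [Metric.mem_ball, Subtype.dist_eq, Real.dist_eq]
        exact lt_of_lt_of_le hPu (min_le_left _ _)
      have hCu := hball hballmem
      have hterm1 : dist (G u P.2) (G u x₀) ≤ 1/(k+1) :=
        hCu P.2 hPS.2 (le_of_lt hPd)
      have hterm2 : dist (G u x₀) (G ↑m x₀) < ε/2 := by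
        apply hδ₂P
        rw [Real.dist_eq]
        exact lt_of_lt_of_le hPu (le_trans (min_le_right _ _) (min_le_left _ _))
      calc dist (ψ P) (G ↑m x₀) ≤ dist (G u P.2) (G u x₀) + dist (G u x₀) (G ↑m x₀) :=
            dist_triangle _ _ _
        _ ≤ 1/(k+1) + dist (G u x₀) (G ↑m x₀) := by linarith
        _ < ε/2 + ε/2 := by linarith
        _ = ε := by ring
    · -- eventually in Ω
      filter_upwards [hu_event (min (↑m) (t₀ - ↑m)) (by apply lt_min hm0; linarith), hmemS]
        with P hPu hPS
      have habs := abs_lt.1 hPu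
      have : 0 ≤ P.1 - c := by
        have : min (↑m:ℝ) (t₀ - ↑m) ≤ ↑m := min_le_left _ _
        linarith [habs.1]
      exact hm _ this hPS.2
  -- compose with G c
  have houter : Tendsto (G c) (𝓝[Ω] (G ↑m x₀)) (𝓝 (G c (G ↑m x₀))) :=
    hcont c hcpos.le _ (hm _ hm0.le hx₀)
  have hfinal := houter.comp hψt
  have hval : G c (G ↑m x₀) = G t₀ x₀ := by
    rw [← hsg c hcpos.le ↑m hm0.le x₀ hx₀]
    congr 1
    simp [hc']
  rw [hval] at hfinal
  rw [ContinuousWithinAt]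
  apply hfinal.congr'
  filter_upwards [hu_event (min (↑m) (t₀ - ↑m)) (by apply lt_min hm0; linarith), hmemS]
    with P hPu hPS
  have habs := abs_lt.1 hPu
  have hP0 : 0 ≤ P.1 - c := by
    have : min (↑m:ℝ) (t₀ - ↑m) ≤ ↑m := min_le_left _ _
    linarith [habs.1]
  have h3 := hsg c hcpos.le (P.1 - c) hP0 P.2 hPS.2
  rw [add_sub_cancel] at h3
  exact h3.symm

end Semiflow

/-- Every semicocycle over a semigroup on a domain `D` is jointly continuous on
`(0,∞) × D`; if moreover the semigroup is jointly continuous on `[0,∞) × D`,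
then the semicocycle is jointly continuous on `[0,∞) × D`. -/
theorem semicocycle_jointly_continuous
    {X A : Type*} [NormedAddCommGroup X] [NormedSpace ℂ X] [CompleteSpace X]
    [NormedRing A] [NormedAlgebra ℂ A] [CompleteSpace A] [NormOneClass A]
    (D : Set X) (hDo : IsOpen D) (hDc : IsConnected D)
    (F : ℝ → X → X)
    (hFmaps : ∀ t ≥ (0:ℝ), Set.MapsTo (F t) D D)
    (hFc : ∀ t ≥ (0:ℝ), ContinuousOn (F t) D)
    (hFsg : ∀ t ≥ (0:ℝ), ∀ s ≥ (0:ℝ), ∀ x ∈ D, F (t + s) x = F t (F s x))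
    (hF0 : ∀ x ∈ D, Tendsto (fun t => F t x) (𝓝[>] (0:ℝ)) (𝓝 x))
    (Γ : ℝ → X → A)
    (hΓc : ∀ t ≥ (0:ℝ), ContinuousOn (Γ t) D)
    (hchain : ∀ t ≥ (0:ℝ), ∀ s ≥ (0:ℝ), ∀ x ∈ D, Γ (t + s) x = Γ t (F s x) * Γ s x)
    (hΓ0 : ∀ x ∈ D, Tendsto (fun t => Γ t x) (𝓝[>] (0:ℝ)) (𝓝 1)) :
    ContinuousOn (fun p : ℝ × X => Γ p.1 p.2) (Set.Ioi (0:ℝ) ×ˢ D) ∧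
    (ContinuousOn (fun p : ℝ × X => F p.1 p.2) (Set.Ici (0:ℝ) ×ˢ D) →
      ContinuousOn (fun p : ℝ × X => Γ p.1 p.2) (Set.Ici (0:ℝ) ×ˢ D)) := by
  -- the combined semiflow on X × A
  set G : ℝ → X × A → X × A := fun t P => (F t P.1, Γ t P.1 * P.2) with hG
  set Ω : Set (X × A) := D ×ˢ (univ : Set A) with hΩ
  have hm : ∀ t ≥ (0:ℝ), Set.MapsTo (G t) Ω Ω := by
    intro t ht P hP
    exact ⟨hFmaps t ht hP.1, trivial⟩
  have hcont : ∀ t ≥ (0:ℝ), ContinuousOn (G t) Ω := by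
    intro t ht
    apply ContinuousOn.prodMk
    · exact (hFc t ht).comp continuous_fst.continuousOn (fun P hP => hP.1)
    · exact ((hΓc t ht).comp continuous_fst.continuousOn (fun P hP => hP.1)).mul
        continuous_snd.continuousOn
  have hsg : ∀ t ≥ (0:ℝ), ∀ s ≥ (0:ℝ), ∀ P ∈ Ω, G (t + s) P = G t (G s P) := by
    intro t ht s hs P hP
    have h1 := hFsg t ht s hs P.1 hP.1
    have h2 := hchain t ht s hs P.1 hP.1
    simp only [hG, Prod.mk.injEq]
    exact ⟨h1, by rw [h2, mul_assoc]⟩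
  have h0 : ∀ P ∈ Ω, Tendsto (fun t => G t P) (𝓝[>] (0:ℝ)) (𝓝 P) := by
    intro P hP
    have h1 : Tendsto (fun t => F t P.1) (𝓝[>] (0:ℝ)) (𝓝 P.1) := hF0 P.1 hP.1
    have h2 : Tendsto (fun t => Γ t P.1 * P.2) (𝓝[>] (0:ℝ)) (𝓝 P.2) := by
      have := (hΓ0 P.1 hP.1).mul (tendsto_const_nhds (x := P.2))
      rwa [one_mul] at this
    have := h1.prodMk_nhds h2
    simpa using this
  have hright : ∀ P ∈ Ω, ∀ u ≥ (0:ℝ), Tendsto (fun w => G w P) (𝓝[≥] u) (𝓝 (G u P)) :=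
    fun P hP u hu => semiflow_right hm hsg h0 hP hu
  have hjointG : ContinuousOn (fun Q : ℝ × (X × A) => G Q.1 Q.2) (Ioi (0:ℝ) ×ˢ Ω) :=
    semiflow_joint hm hcont hsg h0 hright
  -- Part 1
  have hpart1 : ContinuousOn (fun p : ℝ × X => Γ p.1 p.2) (Set.Ioi (0:ℝ) ×ˢ D) := by
    have hι : ContinuousOn (fun p : ℝ × X => ((p.1, (p.2, (1:A))) : ℝ × (X × A)))
        (Set.Ioi (0:ℝ) ×ˢ D) :=
      (continuous_fst.prodMk (continuous_snd.prodMk continuous_const)).continuousOn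
    have hmaps : Set.MapsTo (fun p : ℝ × X => ((p.1, (p.2, (1:A))) : ℝ × (X × A)))
        (Set.Ioi (0:ℝ) ×ˢ D) (Ioi (0:ℝ) ×ˢ Ω) := fun p hp => ⟨hp.1, hp.2, trivial⟩
    have hcomp := hjointG.comp hι hmaps
    have hcomp2 := continuous_snd.comp_continuousOn hcomp
    apply hcomp2.congr
    intro p hp
    simp [hG, Function.comp]
  refine ⟨hpart1, ?_⟩
  -- Part 2
  intro hFjoint
  -- value at 0 : G 0 fixes points of Ω
  have hF0id : ∀ x ∈ D, F 0 x = x := by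
    intro x hx
    have := semiflow_id0 hm hsg h0 (x := (x, (1:A))) ⟨hx, trivial⟩
    exact congrArg Prod.fst this
  have hΓ0id : ∀ x ∈ D, Γ 0 x = 1 := by
    intro x hx
    have := semiflow_id0 hm hsg h0 (x := (x, (1:A))) ⟨hx, trivial⟩
    have h2 := congrArg Prod.snd this
    simpa [hG] using h2
  rintro ⟨t₀, x₀⟩ hp₀
  obtain ⟨ht₀, hx₀⟩ : t₀ ∈ Ici (0:ℝ) ∧ x₀ ∈ D := hp₀
  rcases eq_or_lt_of_le (show (0:ℝ) ≤ t₀ from ht₀) with h | h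
  · -- t₀ = 0
    subst h
    set l : Filter (ℝ × X) := 𝓝[Ici (0:ℝ) ×ˢ D] ((0:ℝ), x₀) with hl
    -- choose a small time c where Γ c x₀ is invertible
    have hev : ∀ᶠ t in 𝓝[>] (0:ℝ), dist (Γ t x₀) 1 < 1/2 :=
      (Metric.tendsto_nhds.1 (hΓ0 x₀ hx₀)) _ (by norm_num)
    obtain ⟨c, hcd, hc0⟩ := (hev.and self_mem_nhdsWithin).exists
    have hnorm : ‖(1:A) - Γ c x₀‖ < 1 := by
      rw [← dist_eq_norm, dist_comm]
      linarith
    set u : Aˣ := Units.oneSub ((1:A) - Γ c x₀) hnorm with hu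
    have huval : (↑u : A) = Γ c x₀ := by
      simp [hu, Units.oneSub, sub_sub_cancel]
    have hunit : IsUnit (Γ c x₀) := ⟨u, huval⟩
    -- inner convergence of F within D
    have hFin : Tendsto (fun p : ℝ × X => F p.1 p.2) l (𝓝[D] x₀) := by
      rw [tendsto_nhdsWithin_iff]
      constructor
      · have h1 := hFjoint ((0:ℝ), x₀) ⟨self_mem_Ici, hx₀⟩
        rw [ContinuousWithinAt] at h1
        have h2 : F ((0:ℝ), x₀).1 ((0:ℝ), x₀).2 = x₀ := hF0id x₀ hx₀
        rwa [h2] at h1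
      · filter_upwards [self_mem_nhdsWithin] with p hp
        exact hFmaps p.1 hp.1 hp.2
    have ha : Tendsto (fun p : ℝ × X => Γ c (F p.1 p.2)) l (𝓝 (Γ c x₀)) := by
      have h1 : Tendsto (Γ c) (𝓝[D] x₀) (𝓝 (Γ c x₀)) := hΓc c hc0.le x₀ hx₀
      exact h1.comp hFin
    -- the shifted map
    have hg : Tendsto (fun p : ℝ × X => ((c + p.1, p.2) : ℝ × X)) l
        (𝓝[Ioi (0:ℝ) ×ˢ D] ((c, x₀) : ℝ × X)) := by
      rw [tendsto_nhdsWithin_iff]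
      constructor
      · have h1 : Tendsto (fun p : ℝ × X => ((c + p.1, p.2) : ℝ × X)) (𝓝 ((0:ℝ), x₀))
            (𝓝 ((c + 0, x₀) : ℝ × X)) :=
          ((continuous_const.add continuous_fst).prodMk continuous_snd).tendsto _
        rw [add_zero] at h1
        exact h1.mono_left nhdsWithin_le_nhds
      · filter_upwards [self_mem_nhdsWithin] with p hp
        exact ⟨by simp only [mem_Ioi]; have := hp.1; simp only [mem_Ici] at this; linarith,
          hp.2⟩
    have hb : Tendsto (fun p : ℝ × X => Γ (c + p.1) p.2) l (𝓝 (Γ c x₀)) := by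
      have h1 := hpart1 ((c, x₀) : ℝ × X) ⟨mem_Ioi.2 hc0, hx₀⟩
      rw [ContinuousWithinAt] at h1
      exact h1.comp hg
    -- inverse times b tends to 1
    have hinvc : ContinuousAt Ring.inverse ((↑u : A)) := NormedRing.inverse_continuousAt u
    rw [huval] at hinvc
    have hinv : Tendsto (fun p : ℝ × X => Ring.inverse (Γ c (F p.1 p.2))) l
        (𝓝 (Ring.inverse (Γ c x₀))) := hinvc.tendsto.comp ha
    have hmul := hinv.mul hb
    rw [Ring.inverse_mul_cancel _ hunit] at hmul
    -- eventual identity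
    have hevunit : ∀ᶠ p : ℝ × X in l, IsUnit (Γ c (F p.1 p.2)) := by
      filter_upwards [(Metric.tendsto_nhds.1 ha) _ (show (0:ℝ) < 1/2 by norm_num)] with p hp
      have : ‖(1:A) - Γ c (F p.1 p.2)‖ < 1 := by
        rw [← dist_eq_norm, dist_comm]
        calc dist (Γ c (F p.1 p.2)) 1 ≤ dist (Γ c (F p.1 p.2)) (Γ c x₀) + dist (Γ c x₀) 1 :=
              dist_triangle _ _ _
          _ < 1/2 + 1/2 := by linarith
          _ = 1 := by norm_num
      exact ⟨Units.oneSub _ this, by simp [Units.oneSub, sub_sub_cancel]⟩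
    have heq : (fun p : ℝ × X => Ring.inverse (Γ c (F p.1 p.2)) * Γ (c + p.1) p.2)
        =ᶠ[l] fun p : ℝ × X => Γ p.1 p.2 := by
      filter_upwards [self_mem_nhdsWithin, hevunit] with p hp hpu
      have hch := hchain c hc0.le p.1 hp.1 p.2 hp.2
      rw [hch, ← mul_assoc, Ring.inverse_mul_cancel _ hpu, one_mul]
    have hfin := Filter.Tendsto.congr' heq hmul
    have h00 : Γ 0 x₀ = 1 := hΓ0id x₀ hx₀
    rw [ContinuousWithinAt]
    simpa [h00] using hfin
  · -- t₀ > 0 : use part 1 via equality of within-filters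
    have hset : (Set.Ioi (0:ℝ) ×ˢ D : Set (ℝ × X)) =ᶠ[𝓝 ((t₀, x₀) : ℝ × X)]
        (Set.Ici (0:ℝ) ×ˢ D : Set (ℝ × X)) := by
      have hopen : IsOpen {p : ℝ × X | 0 < p.1} := isOpen_lt continuous_const continuous_fst
      have hmem : {p : ℝ × X | 0 < p.1} ∈ 𝓝 ((t₀, x₀) : ℝ × X) := hopen.mem_nhds h
      filter_upwards [hmem] with p hp
      simp only [Set.mem_prod, mem_Ioi, mem_Ici, eq_iff_iff]
      exact ⟨fun h' => ⟨mem_Ici.2 (le_of_lt (mem_Ioi.1 h'.1)), h'.2⟩, fun h' => ⟨hp, h'.2⟩⟩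
    have := hpart1 (t₀, x₀) ⟨h, hx₀⟩
    rw [ContinuousWithinAt, nhdsWithin_eq_iff_eventuallyEq.mpr hset] at this
    exact this
end

section
/- Every value Γ_t(x), t ≥ 0, x ∈ D, of a semicocycle {Γ_t}_{t≥0} ⊂ C(D,A) over a jointly continuous semigroup F ⊂ C(D) is an invertible element of the Banach algebra A. -/
open Filter Metric Set Topology

/-- Every value `Γ_t(x)` of a semicocycle over a jointly continuous semigroup is an
invertible element of the Banach algebra `A`. -/
theorem semicocycle_values_invertible
    {X A : Type*} [NormedAddCommGroup X] [NormedSpace ℂ X] [CompleteSpace X]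
    [NormedRing A] [NormedAlgebra ℂ A] [CompleteSpace A] [NormOneClass A]
    (D : Set X) (hDo : IsOpen D) (hDc : IsConnected D)
    (F : ℝ → X → X)
    (hFmaps : ∀ t ≥ (0:ℝ), Set.MapsTo (F t) D D)
    (hFsg : ∀ t ≥ (0:ℝ), ∀ s ≥ (0:ℝ), ∀ x ∈ D, F (t + s) x = F t (F s x))
    (hFjc : ContinuousOn (fun p : ℝ × X => F p.1 p.2) (Set.Ici (0:ℝ) ×ˢ D))
    (Γ : ℝ → X → A)
    (hΓc : ∀ t ≥ (0:ℝ), ContinuousOn (Γ t) D)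
    (hchain : ∀ t ≥ (0:ℝ), ∀ s ≥ (0:ℝ), ∀ x ∈ D, Γ (t + s) x = Γ t (F s x) * Γ s x)
    (hΓ0 : ∀ x ∈ D, Tendsto (fun t => Γ t x) (𝓝[>] (0:ℝ)) (𝓝 1)) :
    ∀ t ≥ (0:ℝ), ∀ x ∈ D, IsUnit (Γ t x) := by
  -- small values are units
  have small : ∀ y ∈ D, ∃ δ > (0:ℝ), ∀ v, 0 < v → v < δ → IsUnit (Γ v y) := by
    intro y hy
    have hev : {v : ℝ | IsUnit (Γ v y)} ∈ 𝓝[>] (0:ℝ) :=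
      (hΓ0 y hy).eventually (Units.isOpen.eventually_mem isUnit_one)
    obtain ⟨u, hu, hsub⟩ := mem_nhdsGT_iff_exists_Ioo_subset.mp hev
    exact ⟨u, hu, fun v h1 h2 => hsub ⟨h1, h2⟩⟩
  -- Γ 0 y = 1
  have h0 : ∀ y ∈ D, Γ 0 y = 1 := by
    intro y hy
    have h1 : Tendsto (fun u => Γ u y) (𝓝[>] (0:ℝ)) (𝓝 1) := hΓ0 y hy
    have h2 : Tendsto (fun u => Γ u (F 0 y) * Γ 0 y) (𝓝[>] (0:ℝ)) (𝓝 (1 * Γ 0 y)) :=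
      (hΓ0 _ (hFmaps 0 le_rfl hy)).mul tendsto_const_nhds
    have h3 : Tendsto (fun u => Γ u y) (𝓝[>] (0:ℝ)) (𝓝 (1 * Γ 0 y)) := by
      refine h2.congr' ?_
      filter_upwards [self_mem_nhdsWithin] with u hu
      have := hchain u (le_of_lt hu) 0 le_rfl y hy
      simpa using this.symm
    have := tendsto_nhds_unique h1 h3
    rw [one_mul] at this
    exact this.symm
  intro t ht x hx
  by_contra hcon
  set B : Set ℝ := {s : ℝ | 0 ≤ s ∧ ¬ IsUnit (Γ s x)} with hB
  have hBne : B.Nonempty := ⟨t, ht, hcon⟩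
  have hbdd : BddBelow B := ⟨0, fun b hb => hb.1⟩
  set T := sInf B with hTdef
  have hT0 : 0 ≤ T := le_csInf hBne fun b hb => hb.1
  have hlt : ∀ s, 0 ≤ s → s < T → IsUnit (Γ s x) := by
    intro s hs hsT
    by_contra h
    exact absurd (csInf_le hbdd ⟨hs, h⟩) (not_le.2 hsT)
  have hFTx : F T x ∈ D := hFmaps T hT0 hx
  obtain ⟨δ, hδpos, hδ⟩ := small (F T x) hFTx
  have hTunit : IsUnit (Γ T x) := by
    rcases eq_or_lt_of_le hT0 with h | hTpos
    · rw [← h, h0 x hx]; exact isUnit_one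
    · set v₀ := δ / 2 with hv₀
      have hv₀pos : 0 < v₀ := by positivity
      have hv₀lt : v₀ < δ := by simp [hv₀]; linarith
      -- continuity of s ↦ Γ v₀ (F s x) at T
      have hFc : ContinuousOn (fun s : ℝ => F s x) (Ici (0:ℝ)) := by
        have : ContinuousOn (fun s : ℝ => ((s, x) : ℝ × X)) (Ici (0:ℝ)) :=
          (continuous_id.prodMk continuous_const).continuousOn
        exact hFjc.comp this fun s hs => ⟨hs, hx⟩
      have hgc : ContinuousOn (fun s : ℝ => Γ v₀ (F s x)) (Ici (0:ℝ)) :=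
        (hΓc v₀ hv₀pos.le).comp hFc fun s hs => hFmaps s hs hx
      have hca : ContinuousAt (fun s : ℝ => Γ v₀ (F s x)) T :=
        (hgc T hT0).continuousAt (Ici_mem_nhds hTpos)
      have hvT : IsUnit (Γ v₀ (F T x)) := hδ v₀ hv₀pos hv₀lt
      have hev : ∀ᶠ s in 𝓝 T, IsUnit (Γ v₀ (F s x)) :=
        hca.eventually (Units.isOpen.eventually_mem hvT)
      obtain ⟨ε, hεpos, hε⟩ := Metric.eventually_nhds_iff.mp hev
      set m := min ε (min v₀ T) with hm
      have hmpos : 0 < m := lt_min hεpos (lt_min hv₀pos hTpos)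
      have hmε : m ≤ ε := min_le_left _ _
      have hmv : m ≤ v₀ := le_trans (min_le_right _ _) (min_le_left _ _)
      have hmT : m ≤ T := le_trans (min_le_right _ _) (min_le_right _ _)
      set s₁ := T - m / 2 with hs₁
      have hs₁0 : 0 ≤ s₁ := by simp [hs₁]; linarith
      have hs₁T : s₁ < T := by simp [hs₁]; linarith
      have hs₁unit : IsUnit (Γ s₁ x) := hlt s₁ hs₁0 hs₁T
      have hΓvFs₁ : IsUnit (Γ v₀ (F s₁ x)) := by
        apply hε
        simp only [hs₁, Real.dist_eq]
        rw [abs_of_nonpos (by linarith)]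
        linarith
      have hsum : IsUnit (Γ (v₀ + s₁) x) := by
        rw [hchain v₀ hv₀pos.le s₁ hs₁0 x hx]
        exact hΓvFs₁.mul hs₁unit
      set v := v₀ - m / 2 with hv
      have hvpos : 0 < v := by simp [hv]; linarith
      have hvlt : v < δ := by simp [hv]; linarith
      have hΓvFT : IsUnit (Γ v (F T x)) := hδ v hvpos hvlt
      have heqt : v + T = v₀ + s₁ := by simp [hv, hs₁]; ring
      have hvTunit : IsUnit (Γ (v + T) x) := by rw [heqt]; exact hsum
      rw [hchain v hvpos.le T hT0 x hx] at hvTunit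
      -- cancel the left unit
      have key : Γ T x = ↑hΓvFT.unit⁻¹ * (Γ v (F T x) * Γ T x) := by
        rw [← mul_assoc]
        nth_rewrite 2 [← hΓvFT.unit_spec]
        rw [Units.inv_mul, one_mul]
      rw [key]
      exact (Units.isUnit _).mul hvTunit
  -- now everything below T + δ is a unit, contradicting T = sInf B
  have hcover : ∀ b ∈ B, T + δ ≤ b := by
    rintro b ⟨hb0, hbnu⟩
    by_contra hltb
    push_neg at hltb
    have hTb : T ≤ b := csInf_le hbdd ⟨hb0, hbnu⟩
    rcases eq_or_lt_of_le hTb with h | h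
    · exact hbnu (h ▸ hTunit)
    · have hu : IsUnit (Γ ((b - T) + T) x) := by
        rw [hchain (b - T) (by linarith) T hT0 x hx]
        exact (hδ (b - T) (by linarith) (by linarith)).mul hTunit
      rw [sub_add_cancel] at hu
      exact hbnu hu
  have : T + δ ≤ T := le_csInf hBne hcover
  linarith
end

section
/- Let F = {F_t}_{t≥0} be a semigroup on a domain D that acts strictly inside D, and let {Γ_t}_{t≥0} be a semicocycle over F such that each Γ_t is bounded on sets strictly inside D. If the semicocycle is T-continuous at t = 0, then it is T-continuous at every t0 ≥ 0. -/
open Filter Metric Set Topology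

/-- A set `S` lies strictly inside the domain `D`. -/
def StrictlyInside {X : Type*} [NormedAddCommGroup X] (D S : Set X) : Prop :=
  S ⊆ D ∧ Bornology.IsBounded S ∧ ∃ ε > 0, ∀ x ∈ S, ε ≤ infDist x Dᶜ

/-- If the semigroup acts strictly inside `D`, the semicocycle values are bounded on
sets strictly inside `D`, and the semicocycle is `T`-continuous at `t = 0`, then it is
`T`-continuous at every `t0 ≥ 0`. -/
theorem Tcontinuous_at_zero_implies_Tcontinuous
    {X A : Type*} [NormedAddCommGroup X] [NormedSpace ℂ X] [CompleteSpace X]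
    [NormedRing A] [NormedAlgebra ℂ A] [CompleteSpace A] [NormOneClass A]
    (D : Set X) (hDo : IsOpen D) (hDc : IsConnected D)
    (F : ℝ → X → X)
    (hFmaps : ∀ t ≥ (0:ℝ), Set.MapsTo (F t) D D)
    (hFc : ∀ t ≥ (0:ℝ), ContinuousOn (F t) D)
    (hFsg : ∀ t ≥ (0:ℝ), ∀ s ≥ (0:ℝ), ∀ x ∈ D, F (t + s) x = F t (F s x))
    (hF0 : ∀ x ∈ D, Tendsto (fun t => F t x) (𝓝[>] (0:ℝ)) (𝓝 x))
    -- `F` acts strictly inside `D`: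
    (hstrict : ∀ S : Set X, StrictlyInside D S → ∀ t0 > (0:ℝ),
      StrictlyInside D {y | ∃ x ∈ S, ∃ t ∈ Set.Icc (0:ℝ) t0, y = F t x})
    (Γ : ℝ → X → A)
    (hΓc : ∀ t ≥ (0:ℝ), ContinuousOn (Γ t) D)
    (hchain : ∀ t ≥ (0:ℝ), ∀ s ≥ (0:ℝ), ∀ x ∈ D, Γ (t + s) x = Γ t (F s x) * Γ s x)
    (hΓ0 : ∀ x ∈ D, Tendsto (fun t => Γ t x) (𝓝[>] (0:ℝ)) (𝓝 1))
    -- each `Γ_t` is bounded on sets strictly inside `D`: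
    (hbdd : ∀ t ≥ (0:ℝ), ∀ S : Set X, StrictlyInside D S → ∃ M : ℝ, ∀ x ∈ S, ‖Γ t x‖ ≤ M)
    -- `T`-continuity at `t = 0`:
    (hT0 : ∀ S : Set X, StrictlyInside D S →
      TendstoUniformlyOn (fun t x => Γ t x) (fun _ => (1:A)) (𝓝[Set.Ici (0:ℝ)] 0) S) :
    ∀ t0 ≥ (0:ℝ), ∀ S : Set X, StrictlyInside D S →
      TendstoUniformlyOn (fun t x => Γ t x) (Γ t0) (𝓝[Set.Ici (0:ℝ)] t0) S := by
  intro t0 ht0 S hS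
  rw [Metric.tendstoUniformlyOn_iff]
  intro ε hε
  rcases eq_or_lt_of_le ht0 with h0 | h0
  · -- case t0 = 0
    subst h0
    have h := Metric.tendstoUniformlyOn_iff.mp (hT0 S hS) (ε / 2) (by linarith)
    have h00 : ∀ x ∈ S, dist (1 : A) (Γ 0 x) < ε / 2 :=
      h.self_of_nhdsWithin (Set.self_mem_Ici)
    filter_upwards [h] with t ht x hx
    calc dist (Γ 0 x) (Γ t x) ≤ dist (Γ 0 x) 1 + dist (1 : A) (Γ t x) := dist_triangle _ _ _
      _ < ε / 2 + ε / 2 := by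
          have := h00 x hx
          rw [dist_comm] at this
          exact add_lt_add this (ht x hx)
      _ = ε := by ring
  · -- case t0 > 0
    set S2 := {y | ∃ x ∈ S, ∃ t ∈ Set.Icc (0:ℝ) t0, y = F t x} with hS2def
    have hS2 : StrictlyInside D S2 := hstrict S hS t0 h0
    have hmem : ∀ t ∈ Set.Icc (0:ℝ) t0, ∀ x ∈ S, F t x ∈ S2 :=
      fun t ht x hx => ⟨x, hx, t, ht, rfl⟩
    -- δ1 : uniform bound ‖Γ s y‖ close to 1 for small s
    have h1 := Metric.tendstoUniformlyOn_iff.mp (hT0 S2 hS2) 1 one_pos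
    rw [eventually_nhdsWithin_iff, Metric.eventually_nhds_iff] at h1
    obtain ⟨δ1, hδ1pos, hδ1⟩ := h1
    set δ := min δ1 t0 with hδdef
    have hδpos : 0 < δ := lt_min hδ1pos h0
    have hδle1 : δ ≤ δ1 := min_le_left _ _
    have hδlet0 : δ ≤ t0 := min_le_right _ _
    -- bounds
    obtain ⟨M0, hM0⟩ := hbdd t0 ht0 S hS
    obtain ⟨M1, hM1⟩ := hbdd (t0 - δ) (by linarith) S hS
    set K0 := max M0 0 with hK0def
    set K1 := max M1 0 with hK1def
    have hK0 : 0 ≤ K0 := le_max_right _ _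
    have hK1 : 0 ≤ K1 := le_max_right _ _
    set K := K0 + 2 * K1 + 1 with hKdef
    have hKpos : 0 < K := by positivity
    set ε' := ε / K with hε'def
    have hε'pos : 0 < ε' := div_pos hε hKpos
    have hεK : ε' * K = ε := div_mul_cancel₀ ε (ne_of_gt hKpos)
    -- δ2 : uniform ε'-closeness to 1 for small s
    have h2 := Metric.tendstoUniformlyOn_iff.mp (hT0 S2 hS2) ε' hε'pos
    rw [eventually_nhdsWithin_iff, Metric.eventually_nhds_iff] at h2
    obtain ⟨δ2, hδ2pos, hδ2⟩ := h2
    set η := min δ2 δ with hηdef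
    have hηpos : 0 < η := lt_min hδ2pos hδpos
    have hηδ2 : η ≤ δ2 := min_le_left _ _
    have hηδ : η ≤ δ := min_le_right _ _
    rw [eventually_nhdsWithin_iff, Metric.eventually_nhds_iff]
    refine ⟨η, hηpos, fun t hdist htIci => fun x hx => ?_⟩
    have hxD : x ∈ D := hS.1 hx
    have htabs : |t - t0| < η := by rwa [Real.dist_eq] at hdist
    have ht0' : (0:ℝ) ≤ t := htIci
    rcases le_or_gt t0 t with hge | hlt
    · -- t ≥ t0
      have hs0 : (0:ℝ) ≤ t - t0 := by linarith
      have key := hchain (t - t0) hs0 t0 ht0 x hxD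
      rw [sub_add_cancel] at key
      have hyS2 : F t0 x ∈ S2 := hmem t0 ⟨ht0, le_refl _⟩ x hx
      have hsdist : dist (t - t0) 0 < δ2 := by
        rw [Real.dist_eq, sub_zero, abs_of_nonneg hs0]
        have : t - t0 < η := by rw [abs_of_nonneg hs0] at htabs; exact htabs
        linarith
      have hsmall := hδ2 hsdist (by exact hs0) (F t0 x) hyS2
      have hnorm1 : ‖(1 : A) - Γ (t - t0) (F t0 x)‖ ≤ ε' := by
        rw [← dist_eq_norm]; exact le_of_lt hsmall
      calc dist (Γ t0 x) (Γ t x) = ‖Γ t0 x - Γ t x‖ := dist_eq_norm _ _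
        _ = ‖(1 - Γ (t - t0) (F t0 x)) * Γ t0 x‖ := by rw [key, sub_mul, one_mul]
        _ ≤ ‖(1 : A) - Γ (t - t0) (F t0 x)‖ * ‖Γ t0 x‖ := norm_mul_le _ _
        _ ≤ ε' * K0 := by
            refine mul_le_mul hnorm1 ?_ (norm_nonneg _) (le_of_lt hε'pos)
            exact le_trans (hM0 x hx) (le_max_left _ _)
        _ < ε' * K := by
            have : K0 < K := by rw [hKdef]; linarith
            exact (mul_lt_mul_iff_right₀ hε'pos).mpr this
        _ = ε := hεK
    · -- t < t0
      have hs0 : (0:ℝ) ≤ t0 - t := by linarith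
      have key := hchain (t0 - t) hs0 t ht0' x hxD
      rw [sub_add_cancel] at key
      have hyS2 : F t x ∈ S2 := hmem t ⟨ht0', le_of_lt hlt⟩ x hx
      have htgt : t0 - t < η := by rw [abs_sub_comm, abs_of_nonneg hs0] at htabs; exact htabs
      -- bound on ‖Γ t x‖
      set u := t - (t0 - δ) with hudef
      have hu0 : (0:ℝ) ≤ u := by rw [hudef]; linarith
      have huδ : u < δ := by rw [hudef]; linarith
      have key2 := hchain u hu0 (t0 - δ) (by linarith) x hxD
      rw [show u + (t0 - δ) = t by rw [hudef]; ring] at key2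
      have hy'S2 : F (t0 - δ) x ∈ S2 := hmem (t0 - δ) ⟨by linarith, by linarith⟩ x hx
      have hb1 := hδ1 (show dist u 0 < δ1 by
        rw [Real.dist_eq, sub_zero, abs_of_nonneg hu0]; linarith) (by exact hu0)
        (F (t0 - δ) x) hy'S2
      have hΓu : ‖Γ u (F (t0 - δ) x)‖ ≤ 2 := by
        have h3 : ‖Γ u (F (t0 - δ) x)‖ - ‖(1 : A)‖ ≤ ‖Γ u (F (t0 - δ) x) - 1‖ :=
          norm_sub_norm_le _ _
        rw [norm_one] at h3
        rw [dist_eq_norm, norm_sub_rev] at hb1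
        linarith
      have hΓt : ‖Γ t x‖ ≤ 2 * K1 := by
        rw [key2]
        calc ‖Γ u (F (t0 - δ) x) * Γ (t0 - δ) x‖
            ≤ ‖Γ u (F (t0 - δ) x)‖ * ‖Γ (t0 - δ) x‖ := norm_mul_le _ _
          _ ≤ 2 * K1 := mul_le_mul hΓu (le_trans (hM1 x hx) (le_max_left _ _))
              (norm_nonneg _) (by norm_num)
      have hsdist : dist (t0 - t) 0 < δ2 := by
        rw [Real.dist_eq, sub_zero, abs_of_nonneg hs0]; linarith
      have hsmall := hδ2 hsdist (by exact hs0) (F t x) hyS2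
      have hnorm1 : ‖Γ (t0 - t) (F t x) - (1 : A)‖ ≤ ε' := by
        rw [← dist_eq_norm, dist_comm]; exact le_of_lt hsmall
      calc dist (Γ t0 x) (Γ t x) = ‖Γ t0 x - Γ t x‖ := dist_eq_norm _ _
        _ = ‖(Γ (t0 - t) (F t x) - 1) * Γ t x‖ := by rw [key, sub_mul, one_mul]
        _ ≤ ‖Γ (t0 - t) (F t x) - (1 : A)‖ * ‖Γ t x‖ := norm_mul_le _ _
        _ ≤ ε' * (2 * K1) := mul_le_mul hnorm1 hΓt (norm_nonneg _) (le_of_lt hε'pos)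
        _ < ε' * K := by
            have : 2 * K1 < K := by rw [hKdef]; linarith
            exact (mul_lt_mul_iff_right₀ hε'pos).mpr this
        _ = ε := hεK
end

section
/- Let a : [0,∞) → A be continuous, A a unital Banach algebra. The unique continuous solution u of the integral equation u(t) = 1_A + ∫₀ᵗ a(s) u(s) ds satisfies the bound ‖u(t)‖ ≤ exp(∫₀ᵗ μ(a(s)) ds), where μ(a) := lim_{t→0⁺} (‖1_A + t a‖ − 1)/t. -/
open Filter Metric Set Topology

/-- The unique continuous solution of `u(t) = 1 + ∫₀ᵗ a(s) u(s) ds` satisfies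
`‖u(t)‖ ≤ exp(∫₀ᵗ μ(a(s)) ds)`, where `μ(a) = lim_{t→0⁺} (‖1 + t a‖ - 1)/t`. -/
theorem solution_norm_bound
    {A : Type*} [NormedRing A] [NormedAlgebra ℂ A] [CompleteSpace A] [NormOneClass A]
    (a u : ℝ → A)
    (ha : ContinuousOn a (Set.Ici (0:ℝ)))
    (hu : ContinuousOn u (Set.Ici (0:ℝ)))
    (hint : ∀ t ≥ (0:ℝ), u t = 1 + ∫ s in (0:ℝ)..t, a s * u s)
    (μ : A → ℝ)
    (hμ : ∀ b : A, Tendsto (fun t : ℝ => (‖(1:A) + t • b‖ - 1) / t) (𝓝[>] (0:ℝ)) (𝓝 (μ b))) :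
    ∀ t ≥ (0:ℝ), ‖u t‖ ≤ Real.exp (∫ s in (0:ℝ)..t, μ (a s)) := by
  have hau : ContinuousOn (fun s => a s * u s) (Set.Ici (0:ℝ)) := ha.mul hu
  -- μ is 1-Lipschitz
  have hlip : ∀ b c : A, μ b - μ c ≤ ‖b - c‖ := by
    intro b c
    have h1 : Tendsto (fun t : ℝ => (‖(1:A) + t • b‖ - 1) / t - (‖(1:A) + t • c‖ - 1) / t)
        (𝓝[>] (0:ℝ)) (𝓝 (μ b - μ c)) := (hμ b).sub (hμ c)
    refine le_of_tendsto h1 ?_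
    filter_upwards [self_mem_nhdsWithin] with t ht
    have ht' : (0:ℝ) < t := ht
    rw [div_sub_div_same, div_le_iff₀ ht']
    have h2 : ‖(1:A) + t • b‖ - ‖(1:A) + t • c‖ ≤ ‖((1:A) + t • b) - ((1:A) + t • c)‖ :=
      norm_sub_norm_le _ _
    have h3 : ((1:A) + t • b) - ((1:A) + t • c) = t • (b - c) := by
      rw [smul_sub]; abel
    rw [h3, norm_smul, Real.norm_eq_abs, abs_of_pos ht'] at h2
    linarith
  have hμc : Continuous μ := by
    have : LipschitzWith 1 μ := by
      refine LipschitzWith.of_dist_le_mul fun b c => ?_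
      rw [Real.dist_eq, dist_eq_norm, NNReal.coe_one, one_mul, abs_sub_le_iff]
      exact ⟨hlip b c, by simpa [norm_sub_rev] using hlip c b⟩
    exact this.continuous
  have hg : ContinuousOn (fun s => μ (a s)) (Set.Ici (0:ℝ)) := hμc.comp_continuousOn ha
  -- key upper bound on right slopes of ‖u‖
  have key : ∀ x ∈ Set.Ici (0:ℝ), ∀ r : ℝ, μ (a x) * ‖u x‖ < r →
      ∀ᶠ z in 𝓝[>] x, (‖u z‖ - ‖u x‖) / (z - x) < r := by
    intro x hx r hr
    obtain ⟨δ, hδ0, hδr⟩ : ∃ δ > 0, μ (a x) * ‖u x‖ + δ * (‖u x‖ + 1) < r := by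
      refine ⟨(r - μ (a x) * ‖u x‖) / (2 * (‖u x‖ + 1)), div_pos (sub_pos.2 hr) (by positivity), ?_⟩
      have h1 : (0:ℝ) < ‖u x‖ + 1 := by positivity
      have h2 : (r - μ (a x) * ‖u x‖) / (2 * (‖u x‖ + 1)) * (‖u x‖ + 1)
          = (r - μ (a x) * ‖u x‖) / 2 := by field_simp
      rw [h2]; linarith
    obtain ⟨η, hη0, hη⟩ := Metric.continuousWithinAt_iff.1 (hau x hx) δ hδ0
    have h2 : ∀ᶠ h in 𝓝[>] (0:ℝ), (‖(1:A) + h • a x‖ - 1) / h < μ (a x) + δ :=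
      (hμ (a x)).eventually_lt_const (by linarith)
    have hsub : Tendsto (fun z => z - x) (𝓝[>] x) (𝓝[>] (0:ℝ)) := by
      refine tendsto_nhdsWithin_of_tendsto_nhds_of_eventually_within _ ?_ ?_
      · have h0 : Tendsto (fun z : ℝ => z - x) (𝓝 x) (𝓝 (x - x)) :=
          (continuous_id.sub continuous_const).tendsto x
        rw [sub_self] at h0
        exact h0.mono_left nhdsWithin_le_nhds
      · filter_upwards [self_mem_nhdsWithin] with z hz
        exact sub_pos.2 (Set.mem_Ioi.1 hz)
    filter_upwards [hsub.eventually h2,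
      Ioo_mem_nhdsGT_of_mem (left_mem_Ico.2 (lt_add_of_pos_right x hη0)),
      self_mem_nhdsWithin] with z hz1 hz2 hz3
    have hzx : x < z := hz3
    have hz0 : (0:ℝ) ≤ z := le_trans hx hzx.le
    have hii : ∀ p q : ℝ, 0 ≤ p → IntervalIntegrable (fun s => a s * u s)
        MeasureTheory.volume p q → True := fun _ _ _ _ => trivial
    have hint1 : IntervalIntegrable (fun s => a s * u s) MeasureTheory.volume 0 z := by
      refine (hau.mono ?_).intervalIntegrable
      rw [Set.uIcc_of_le hz0]; exact fun s hs => hs.1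
    have hint2 : IntervalIntegrable (fun s => a s * u s) MeasureTheory.volume 0 x := by
      refine (hau.mono ?_).intervalIntegrable
      rw [Set.uIcc_of_le hx]; exact fun s hs => hs.1
    have hint3 : IntervalIntegrable (fun s => a s * u s) MeasureTheory.volume x z := by
      refine (hau.mono ?_).intervalIntegrable
      rw [Set.uIcc_of_le hzx.le]; exact fun s hs => le_trans hx hs.1
    have hdiff : u z - u x = ∫ s in x..z, a s * u s := by
      rw [hint z hz0, hint x hx]
      rw [show ((1:A) + ∫ s in (0:ℝ)..z, a s * u s) - (1 + ∫ s in (0:ℝ)..x, a s * u s)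
        = (∫ s in (0:ℝ)..z, a s * u s) - ∫ s in (0:ℝ)..x, a s * u s by abel]
      exact intervalIntegral.integral_interval_sub_left hint1 hint2
    have hkey : ‖u z - ((1:A) + (z - x) • a x) * u x‖ ≤ δ * (z - x) := by
      have heq : u z - ((1:A) + (z - x) • a x) * u x
          = ∫ s in x..z, (a s * u s - a x * u x) := by
        rw [intervalIntegral.integral_sub hint3 intervalIntegrable_const,
          intervalIntegral.integral_const, ← hdiff, add_mul, one_mul, smul_mul_assoc]
        abel
      rw [heq]
      have hb := intervalIntegral.norm_integral_le_of_norm_le_const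
        (f := fun s => a s * u s - a x * u x) (C := δ) (a := x) (b := z) ?_
      · rwa [abs_of_pos (sub_pos.2 hzx)] at hb
      · intro s hs
        rw [Set.uIoc_of_le hzx.le] at hs
        have hs0 : s ∈ Set.Ici (0:ℝ) := le_trans hx hs.1.le
        have hds : dist s x < η := by
          rw [Real.dist_eq, abs_of_nonneg (sub_nonneg.2 hs.1.le)]
          have := hz2.2
          linarith [hs.2]
        have := hη hs0 hds
        rw [dist_eq_norm] at this
        exact this.le
    have hnorm : ‖u z‖ ≤ ‖(1:A) + (z - x) • a x‖ * ‖u x‖ + δ * (z - x) := by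
      have h4 : ‖u z‖ - ‖((1:A) + (z - x) • a x) * u x‖
          ≤ ‖u z - ((1:A) + (z - x) • a x) * u x‖ := norm_sub_norm_le _ _
      have h5 : ‖((1:A) + (z - x) • a x) * u x‖ ≤ ‖(1:A) + (z - x) • a x‖ * ‖u x‖ :=
        norm_mul_le _ _
      linarith
    have hzx0 : (0:ℝ) < z - x := sub_pos.2 hzx
    rw [div_lt_iff₀ hzx0]
    rw [div_lt_iff₀ hzx0] at hz1
    nlinarith [mul_le_mul_of_nonneg_right hz1.le (norm_nonneg (u x)), norm_nonneg (u x),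
      norm_nonneg (u z), mul_pos hδ0 hzx0]
  intro t ht
  set φ : ℝ → ℝ := fun x => ∫ s in (0:ℝ)..x, μ (a s) with hφdef
  have main : ∀ ε : ℝ, 0 < ε → ‖u t‖ ≤ Real.exp (φ t + ε * t) := by
    intro ε hε
    have hgint : MeasureTheory.IntegrableOn (fun s => μ (a s)) (Set.uIcc (0:ℝ) t) := by
      rw [Set.uIcc_of_le ht]
      exact (hg.mono fun s hs => hs.1).integrableOn_Icc
    have hφcont : ContinuousOn φ (Set.Icc 0 t) := by
      have := intervalIntegral.continuousOn_primitive_interval hgint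
      rwa [Set.uIcc_of_le ht] at this
    have hBcont : ContinuousOn (fun x => Real.exp (φ x + ε * x)) (Set.Icc 0 t) :=
      Real.continuous_exp.comp_continuousOn
        (hφcont.add (continuous_const.mul continuous_id).continuousOn)
    have hB' : ∀ x ∈ Set.Ico (0:ℝ) t,
        HasDerivWithinAt (fun x => Real.exp (φ x + ε * x)) (Real.exp (φ x + ε * x) * (μ (a x) + ε)) (Set.Ici x) x := by
      intro x hx
      have hx0 : (0:ℝ) ≤ x := hx.1
      have hφ' : HasDerivWithinAt φ (μ (a x)) (Set.Ici x) x := by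
        refine intervalIntegral.integral_hasDerivWithinAt_right ?_ ?_ ?_
        · refine (hg.mono ?_).intervalIntegrable
          rw [Set.uIcc_of_le hx0]; exact fun s hs => hs.1
        · exact (hg.mono (fun s hs => le_trans hx0 (le_of_lt hs))).stronglyMeasurableAtFilter_nhdsWithin
            measurableSet_Ioi x
        · exact (hg x hx0).mono (fun s hs => le_trans hx0 (le_of_lt hs))
      have hlin : HasDerivWithinAt (fun y : ℝ => ε * y) ε (Set.Ici x) x := by
        simpa using ((hasDerivAt_id x).const_mul ε).hasDerivWithinAt
      exact (hφ'.add hlin).exp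
    have ha0 : ‖u 0‖ ≤ Real.exp (φ 0 + ε * 0) := by
      rw [hint 0 le_rfl, intervalIntegral.integral_same, add_zero, norm_one]
      simp [hφdef]
    have happ := image_le_of_liminf_slope_right_lt_deriv_boundary'
      (f := fun x => ‖u x‖)
      (f' := fun x => μ (a x) * ‖u x‖ + (ε / 2) * Real.exp (φ x + ε * x))
      (B := fun x => Real.exp (φ x + ε * x))
      (B' := fun x => Real.exp (φ x + ε * x) * (μ (a x) + ε))
      ((hu.mono fun s hs => hs.1).norm)
      (fun x hx r hr => by
        have h1 : μ (a x) * ‖u x‖ < r := by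
          have h2 : (0:ℝ) < Real.exp (φ x + ε * x) := Real.exp_pos _
          nlinarith
        refine ((key x hx.1 r h1).mono ?_).frequently
        intro z hz
        rwa [slope_def_field])
      ha0 hBcont hB'
      (fun x hx heq => by
        have h1 : ‖u x‖ = Real.exp (φ x + ε * x) := heq
        show μ (a x) * ‖u x‖ + ε / 2 * Real.exp (φ x + ε * x)
          < Real.exp (φ x + ε * x) * (μ (a x) + ε)
        rw [h1]
        nlinarith [Real.exp_pos (φ x + ε * x), hε])
    exact happ (Set.right_mem_Icc.2 ht)
  have hT : Tendsto (fun ε : ℝ => Real.exp (φ t + ε * t)) (𝓝[>] (0:ℝ))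
      (𝓝 (Real.exp (φ t))) := by
    have h1 : Tendsto (fun ε : ℝ => Real.exp (φ t + ε * t)) (𝓝 (0:ℝ))
        (𝓝 (Real.exp (φ t + 0 * t))) :=
      (Real.continuous_exp.comp (continuous_const.add (continuous_id.mul continuous_const))).tendsto 0
    rw [zero_mul, add_zero] at h1
    exact h1.mono_left nhdsWithin_le_nhds
  refine ge_of_tendsto hT ?_
  filter_upwards [self_mem_nhdsWithin] with ε hε using main ε hε
end

section
/- Let B : D → A be continuous and F = {F_t}_{t≥0} ⊂ C(D) a semigroup such that for each x, t ↦ F_t(x) is continuous. For each x ∈ D let u(·,x) be the unique solution of the evolution problem ∂u/∂t(t,x) = B(F_t(x)) u(t,x), u(0,x) = 1_A. Then the family Γ_t(x) := u(t,x) satisfies the chain rule Γ_{t+s}(x) = Γ_t(F_s(x)) Γ_s(x) for all t,s ≥ 0 and x ∈ D, and Γ_t(x) → 1_A as t → 0⁺; i.e., it is a semicocycle over F. -/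
open Filter Metric Set Topology

/-- The solution of the evolution problem `∂u/∂t = B(F_t(x)) u`, `u(0,x) = 1`, is a
semicocycle over the semigroup `F`. -/
theorem evolution_solution_is_semicocycle
    {X A : Type*} [NormedAddCommGroup X] [NormedSpace ℂ X] [CompleteSpace X]
    [NormedRing A] [NormedAlgebra ℂ A] [CompleteSpace A] [NormOneClass A]
    (D : Set X) (hDo : IsOpen D) (hDc : IsConnected D)
    (B : X → A) (hB : ContinuousOn B D)
    (F : ℝ → X → X)
    (hFmaps : ∀ t ≥ (0:ℝ), Set.MapsTo (F t) D D)
    (hFc : ∀ t ≥ (0:ℝ), ContinuousOn (F t) D)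
    (hFsg : ∀ t ≥ (0:ℝ), ∀ s ≥ (0:ℝ), ∀ x ∈ D, F (t + s) x = F t (F s x))
    (hFid : ∀ x ∈ D, F 0 x = x)
    (hFt : ∀ x ∈ D, ContinuousOn (fun t => F t x) (Set.Ici (0:ℝ)))
    (hF0 : ∀ x ∈ D, Tendsto (fun t => F t x) (𝓝[>] (0:ℝ)) (𝓝 x))
    (u : ℝ → X → A)
    (hu0 : ∀ x ∈ D, u 0 x = 1)
    (hud : ∀ x ∈ D, ∀ t ≥ (0:ℝ),
      HasDerivWithinAt (fun r => u r x) (B (F t x) * u t x) (Set.Ici (0:ℝ)) t) :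
    (∀ t ≥ (0:ℝ), ∀ s ≥ (0:ℝ), ∀ x ∈ D, u (t + s) x = u t (F s x) * u s x) ∧
    (∀ x ∈ D, Tendsto (fun t => u t x) (𝓝[>] (0:ℝ)) (𝓝 1)) := by
  constructor
  · intro t ht s hs x hx
    have hFsx : F s x ∈ D := hFmaps s hs hx
    -- clamp function
    set π : ℝ → ℝ := fun r => min (max r 0) t with hπ
    have hπmem : ∀ r, π r ∈ Icc (0:ℝ) t := fun r =>
      ⟨le_min (le_max_right r 0) ht, min_le_right _ _⟩
    have hπeq : ∀ r ∈ Icc (0:ℝ) t, π r = r := by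
      intro r hr
      simp [hπ, max_eq_left hr.1, min_eq_left hr.2]
    -- continuity of the coefficient on the compact interval
    have hcoef : ContinuousOn (fun r : ℝ => B (F (r + s) x)) (Icc 0 t) := by
      have h1 : ContinuousOn (fun r : ℝ => r + s) (Icc 0 t) :=
        (continuous_id.add continuous_const).continuousOn
      have hmaps1 : MapsTo (fun r : ℝ => r + s) (Icc 0 t) (Ici 0) :=
        fun r hr => by simp only [mem_Ici]; linarith [hr.1]
      have hmaps2 : MapsTo (fun r : ℝ => F r x) (Ici 0) D :=
        fun r hr => hFmaps r hr hx
      exact hB.comp ((hFt x hx).comp h1 hmaps1) (hmaps2.comp hmaps1)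
    obtain ⟨C, hC⟩ := (isCompact_Icc).exists_bound_of_continuousOn hcoef
    -- The vector field
    set v : ℝ → A → A := fun r y => B (F (π r + s) x) * y with hv_def
    have hv : ∀ r, LipschitzOnWith C.toNNReal (v r) univ := by
      intro r
      refine LipschitzWith.lipschitzOnWith ?_
      refine LipschitzWith.of_dist_le_mul fun y z => ?_
      have hb : ‖B (F (π r + s) x)‖ ≤ C := hC _ (hπmem r)
      calc dist (v r y) (v r z) = ‖B (F (π r + s) x) * (y - z)‖ := by
            rw [dist_eq_norm, hv_def, ← mul_sub]
        _ ≤ ‖B (F (π r + s) x)‖ * ‖y - z‖ := norm_mul_le _ _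
        _ ≤ C.toNNReal * dist y z := by
            rw [dist_eq_norm]
            exact mul_le_mul_of_nonneg_right
              (hb.trans (Real.le_coe_toNNReal C)) (norm_nonneg _)
    set f : ℝ → A := fun r => u (r + s) x with hf_def
    set g : ℝ → A := fun r => u r (F s x) * u s x with hg_def
    have hfc : ContinuousOn f (Icc 0 t) := by
      have h1 : ContinuousOn (fun r : ℝ => u r x) (Ici 0) :=
        fun r hr => (hud x hx r hr).continuousWithinAt
      have hmaps1 : MapsTo (fun r : ℝ => r + s) (Icc 0 t) (Ici 0) :=
        fun r hr => by simp only [mem_Ici]; linarith [hr.1]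
      exact h1.comp (continuous_id.add continuous_const).continuousOn hmaps1
    have hgc : ContinuousOn g (Icc 0 t) := by
      have h1 : ContinuousOn (fun r : ℝ => u r (F s x)) (Ici 0) :=
        fun r hr => (hud (F s x) hFsx r hr).continuousWithinAt
      exact (h1.mono Icc_subset_Ici_self).mul continuousOn_const
    have hf' : ∀ r ∈ Ico (0:ℝ) t, HasDerivWithinAt f (v r (f r)) (Ici r) r := by
      intro r hr
      have hrs : (0:ℝ) ≤ r + s := by linarith [hr.1]
      have h1 := hud x hx (r + s) hrs
      have h2 : HasDerivWithinAt (fun r' : ℝ => r' + s) 1 (Ici r) r :=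
        (hasDerivWithinAt_id r (Ici r)).add_const s
      have hmaps : MapsTo (fun r' : ℝ => r' + s) (Ici r) (Ici 0) :=
        fun r' hr' => by simp only [mem_Ici] at *; linarith [hr.1]
      have h3 := h1.scomp r h2 hmaps
      rw [one_smul] at h3
      have hπr : π r = r := hπeq r ⟨hr.1, hr.2.le⟩
      have : v r (f r) = B (F (r + s) x) * u (r + s) x := by
        show B (F (π r + s) x) * u (r + s) x = _
        rw [hπr]
      rw [this]
      exact h3
    have hg' : ∀ r ∈ Ico (0:ℝ) t, HasDerivWithinAt g (v r (g r)) (Ici r) r := by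
      intro r hr
      have h1 := (hud (F s x) hFsx r hr.1).mul_const (u s x)
      have h2 : HasDerivWithinAt g (B (F r (F s x)) * u r (F s x) * u s x) (Ici r) r :=
        h1.mono (Ici_subset_Ici.2 hr.1)
      have hπr : π r = r := hπeq r ⟨hr.1, hr.2.le⟩
      have : v r (g r) = B (F r (F s x)) * u r (F s x) * u s x := by
        show B (F (π r + s) x) * (u r (F s x) * u s x) = _
        rw [hπr, hFsg r hr.1 s hs x hx, mul_assoc]
      rw [this]
      exact h2
    have h0 : f 0 = g 0 := by
      simp [hf_def, hg_def, hu0 (F s x) hFsx]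
    have := ODE_solution_unique_of_mem_Icc_right (fun r _ => hv r) hfc hf'
      (fun r _ => mem_univ (f r)) hgc hg' (fun r _ => mem_univ (g r)) h0
      (right_mem_Icc.2 ht)
    simpa [hf_def, hg_def] using this
  · intro x hx
    have h := (hud x hx 0 le_rfl).continuousWithinAt
    unfold ContinuousWithinAt at h
    have h' : Tendsto (fun r => u r x) (𝓝[≥] 0) (𝓝 1) := by
      simpa [hu0 x hx] using h
    exact h'.mono_left (nhdsWithin_mono _ Ioi_subset_Ici_self)
end

section
/- Let D* ⊆ D be a set invariant under the semigroup F = {F_t}, and let {Γ_t} be a semicocycle over F that is differentiable in t with generator B(x) = (d/dt)Γ_t(x)|_{t=0}, B continuous. Then sup_{x∈D*} ‖Γ_t(x)‖ ≤ e^{Kt} for all t ≥ 0 if and only if μ(B(x)) ≤ K for all x ∈ D*, where μ(a) = lim_{t→0⁺}(‖1_A + t a‖ − 1)/t. -/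
open Filter Metric Set Topology

/-- Error term from a right derivative tends to `0` along `𝓝[>] t`. -/
lemma err_tendsto {A : Type*} [NormedAddCommGroup A] [NormedSpace ℝ A]
    {c : ℝ → A} {d : A} {t : ℝ} (ht : 0 ≤ t)
    (hd : HasDerivWithinAt c d (Set.Ici (0:ℝ)) t) :
    Tendsto (fun z => ‖c z - c t - (z - t) • d‖ / (z - t)) (𝓝[>] t) (𝓝 0) := by
  have h := hasDerivWithinAt_iff_tendsto.1 hd
  have hsub : Set.Ioi t ⊆ Set.Ici (0:ℝ) := fun z hz => le_of_lt (lt_of_le_of_lt ht hz)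
  have h2 := h.mono_left (nhdsWithin_mono t hsub)
  refine h2.congr' ?_
  filter_upwards [self_mem_nhdsWithin] with z hz
  have hzt : (0:ℝ) < z - t := sub_pos.2 hz
  rw [Real.norm_eq_abs, abs_of_pos hzt, div_eq_inv_mul]

/-- For a semicocycle `Γ` with continuous generator `B` over a semigroup `F`, and an
`F`-invariant set `D* ⊆ D`: `sup_{x∈D*} ‖Γ_t(x)‖ ≤ e^{Kt}` for all `t ≥ 0` if and only
if `μ(B(x)) ≤ K` for all `x ∈ D*`. -/
theorem growth_bound_iff_mu_bound
    {X A : Type*} [NormedAddCommGroup X] [NormedSpace ℂ X] [CompleteSpace X]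
    [NormedRing A] [NormedAlgebra ℂ A] [CompleteSpace A] [NormOneClass A]
    (D Dstar : Set X) (hDo : IsOpen D) (hDc : IsConnected D) (hsub : Dstar ⊆ D)
    (F : ℝ → X → X)
    (hFmaps : ∀ t ≥ (0:ℝ), Set.MapsTo (F t) D D)
    (hFinv : ∀ t ≥ (0:ℝ), Set.MapsTo (F t) Dstar Dstar)
    (hFc : ∀ t ≥ (0:ℝ), ContinuousOn (F t) D)
    (hFsg : ∀ t ≥ (0:ℝ), ∀ s ≥ (0:ℝ), ∀ x ∈ D, F (t + s) x = F t (F s x))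
    (hFid : ∀ x ∈ D, F 0 x = x)
    (hF0 : ∀ x ∈ D, Tendsto (fun t => F t x) (𝓝[>] (0:ℝ)) (𝓝 x))
    (B : X → A) (hB : ContinuousOn B D)
    (Γ : ℝ → X → A)
    (hΓ0 : ∀ x ∈ D, Γ 0 x = 1)
    (hΓd : ∀ x ∈ D, ∀ t ≥ (0:ℝ),
      HasDerivWithinAt (fun r => Γ r x) (B (F t x) * Γ t x) (Set.Ici (0:ℝ)) t)
    (μ : A → ℝ)
    (hμ : ∀ b : A, Tendsto (fun t : ℝ => (‖(1:A) + t • b‖ - 1) / t) (𝓝[>] (0:ℝ)) (𝓝 (μ b)))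
    (K : ℝ) :
    (∀ t ≥ (0:ℝ), ∀ x ∈ Dstar, ‖Γ t x‖ ≤ Real.exp (K * t)) ↔
      (∀ x ∈ Dstar, μ (B x) ≤ K) := by
  constructor
  · -- growth bound ⟹ μ(B x) ≤ K
    intro hgrow x hx
    have hxD : x ∈ D := hsub hx
    have hd0 : HasDerivWithinAt (fun r => Γ r x) (B x) (Set.Ici (0:ℝ)) 0 := by
      have := hΓd x hxD 0 le_rfl
      rwa [hFid x hxD, hΓ0 x hxD, mul_one] at this
    -- error term
    have herr := err_tendsto (A := A) le_rfl hd0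
    -- slope of exp (K t) at 0⁺ tends to K
    have hexp : Tendsto (fun t : ℝ => (Real.exp (K * t) - 1) / t) (𝓝[>] (0:ℝ)) (𝓝 K) := by
      have h1 : HasDerivAt (fun t : ℝ => Real.exp (K * t)) K 0 := by
        have := (Real.hasDerivAt_exp (K * 0)).comp 0 ((hasDerivAt_id (0:ℝ)).const_mul K)
        simpa [Function.comp_def] using this
      have h2 := hasDerivAt_iff_tendsto_slope.1 h1
      have h3 := h2.mono_left (nhdsWithin_mono (0:ℝ) (fun z hz => ne_of_gt hz))
      refine h3.congr ?_
      intro z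
      simp [slope_def_field, div_eq_inv_mul]
    -- comparison
    have hle : ∀ᶠ t in 𝓝[>] (0:ℝ),
        (‖(1:A) + t • B x‖ - 1) / t ≤ (Real.exp (K * t) - 1) / t
          + ‖Γ t x - Γ 0 x - (t - 0) • B x‖ / (t - 0) := by
      filter_upwards [self_mem_nhdsWithin] with t ht
      have htpos : (0:ℝ) < t := ht
      rw [sub_zero]
      have key : ‖(1:A) + t • B x‖ - 1 ≤ (Real.exp (K * t) - 1)
          + ‖Γ t x - Γ 0 x - t • B x‖ := by
        have h1 := norm_sub_norm_le ((1:A) + t • B x) (Γ t x)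
        rw [norm_sub_rev] at h1
        have h2 : ‖Γ t x‖ ≤ Real.exp (K * t) := hgrow t htpos.le x hx
        have h3 : Γ t x - ((1:A) + t • B x) = Γ t x - Γ 0 x - t • B x := by
          rw [hΓ0 x hxD]; abel
        rw [h3] at h1
        linarith
      calc (‖(1:A) + t • B x‖ - 1) / t
          ≤ ((Real.exp (K * t) - 1) + ‖Γ t x - Γ 0 x - t • B x‖) / t :=
            (div_le_div_iff_of_pos_right htpos).2 key
        _ = (Real.exp (K * t) - 1) / t + ‖Γ t x - Γ 0 x - t • B x‖ / t := add_div _ _ _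
    have hrhs : Tendsto (fun t : ℝ => (Real.exp (K * t) - 1) / t
        + ‖Γ t x - Γ 0 x - (t - 0) • B x‖ / (t - 0)) (𝓝[>] (0:ℝ)) (𝓝 (K + 0)) :=
      hexp.add herr
    rw [add_zero] at hrhs
    exact le_of_tendsto_of_tendsto (hμ (B x)) hrhs hle
  · -- μ(B x) ≤ K on Dstar ⟹ growth bound
    intro hmu T hT x hx
    have hxD : x ∈ D := hsub hx
    set f : ℝ → ℝ := fun t => ‖Γ t x‖ with hf_def
    have hfc : ContinuousOn f (Set.Icc 0 T) := by
      intro t ht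
      exact (((hΓd x hxD t ht.1).continuousWithinAt).mono
        (fun z hz => hz.1 : Set.Icc (0:ℝ) T ⊆ Set.Ici 0)).norm
    have key := le_gronwallBound_of_liminf_deriv_right_le
      (f := f) (f' := fun t => K * f t) (δ := 1) (K := K) (ε := 0) (a := 0) (b := T)
      hfc ?_ ?_ ?_ T (Set.right_mem_Icc.2 hT)
    · rw [sub_zero, gronwallBound_ε0, one_mul] at key
      exact key
    · -- liminf slope condition
      intro t ht r hr
      have htpos : (0:ℝ) ≤ t := ht.1
      have hFt : F t x ∈ Dstar := hFinv t htpos hx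
      set b' : A := B (F t x) with hb'
      have hμb : μ b' ≤ K := hmu _ hFt
      have hd := hΓd x hxD t htpos
      have herr := err_tendsto (A := A) htpos hd
      -- first term
      have hfirst : Tendsto (fun z : ℝ => (‖(1:A) + (z - t) • b'‖ - 1) / (z - t))
          (𝓝[>] t) (𝓝 (μ b')) := by
        refine (hμ b').comp ?_
        rw [tendsto_nhdsWithin_iff]
        constructor
        · have : Tendsto (fun z : ℝ => z - t) (𝓝 t) (𝓝 (t - t)) :=
            (continuous_id.sub continuous_const).tendsto t
          rw [sub_self] at this
          exact this.mono_left nhdsWithin_le_nhds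
        · filter_upwards [self_mem_nhdsWithin] with z hz
          exact Set.mem_Ioi.2 (sub_pos.2 hz)
      set g : ℝ → ℝ := fun z => (‖(1:A) + (z - t) • b'‖ - 1) / (z - t) * f t
        + ‖Γ z x - Γ t x - (z - t) • (b' * Γ t x)‖ / (z - t) with hg_def
      have hg : Tendsto g (𝓝[>] t) (𝓝 (μ b' * f t + 0)) :=
        (hfirst.mul_const (f t)).add herr
      rw [add_zero] at hg
      have hr' : K * f t < r := hr
      have hlt : μ b' * f t < r := by
        have : μ b' * f t ≤ K * f t := mul_le_mul_of_nonneg_right hμb (norm_nonneg _)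
        linarith
      have hev1 : ∀ᶠ z in 𝓝[>] t, g z < r := hg.eventually (gt_mem_nhds hlt)
      have hev2 : ∀ᶠ z in 𝓝[>] t, (z - t)⁻¹ * (f z - f t) ≤ g z := by
        filter_upwards [self_mem_nhdsWithin] with z hz
        have hzt : (0:ℝ) < z - t := sub_pos.2 hz
        have hprod : (1 + (z - t) • b') * Γ t x = Γ t x + (z - t) • (b' * Γ t x) := by
          rw [add_mul, one_mul, smul_mul_assoc]
        have h1 : ‖Γ z x‖ - ‖Γ t x + (z - t) • (b' * Γ t x)‖
            ≤ ‖Γ z x - Γ t x - (z - t) • (b' * Γ t x)‖ := by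
          have h3 : Γ z x - (Γ t x + (z - t) • (b' * Γ t x))
              = Γ z x - Γ t x - (z - t) • (b' * Γ t x) := by abel
          have := norm_sub_norm_le (Γ z x) (Γ t x + (z - t) • (b' * Γ t x))
          rwa [h3] at this
        have h2 : ‖Γ t x + (z - t) • (b' * Γ t x)‖ ≤ ‖(1:A) + (z - t) • b'‖ * ‖Γ t x‖ := by
          rw [← hprod]; exact norm_mul_le _ _
        have hnum : f z - f t ≤ (‖(1:A) + (z - t) • b'‖ - 1) * f t
            + ‖Γ z x - Γ t x - (z - t) • (b' * Γ t x)‖ := by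
          have : f z ≤ ‖(1:A) + (z - t) • b'‖ * f t
              + ‖Γ z x - Γ t x - (z - t) • (b' * Γ t x)‖ := by linarith
          have hft : f t = 1 * f t := (one_mul _).symm
          calc f z - f t ≤ ‖(1:A) + (z - t) • b'‖ * f t
              + ‖Γ z x - Γ t x - (z - t) • (b' * Γ t x)‖ - f t := by linarith
            _ = (‖(1:A) + (z - t) • b'‖ - 1) * f t
              + ‖Γ z x - Γ t x - (z - t) • (b' * Γ t x)‖ := by ring
        calc (z - t)⁻¹ * (f z - f t)
            ≤ (z - t)⁻¹ * ((‖(1:A) + (z - t) • b'‖ - 1) * f t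
              + ‖Γ z x - Γ t x - (z - t) • (b' * Γ t x)‖) :=
              mul_le_mul_of_nonneg_left hnum (inv_nonneg.2 hzt.le)
          _ = g z := by
              rw [hg_def]
              field_simp
      exact ((hev2.and hev1).mono fun z hz => lt_of_le_of_lt hz.1 hz.2).frequently
    · show ‖Γ 0 x‖ ≤ 1
      rw [hΓ0 x hxD, norm_one]
    · intro t _
      show K * f t ≤ K * f t + 0
      simp
end

section
/- Let D be a bounded domain in a complex Banach space X, F = {F_t} ⊂ Hol(D) a T-continuous semigroup, and B ∈ Hol(D, A). Then the semicocycle {Γ_t} obtained by solving (d/dt)Γ_t(x) = B(F_t(x))Γ_t(x), Γ_0(x) = 1_A, is uniformly jointly continuous: for every x0 ∈ D there are a neighborhood U of x0 and δ > 0 with sup_{x∈U}‖Γ_t(x) − 1_A‖ → 0 as t → 0⁺, and the corresponding property at every t0 ≥ 0. -/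
open Filter Metric Set Topology

/-- On a bounded domain `D` in a complex Banach space, the semicocycle obtained by
solving `(d/dt)Γ_t(x) = B(F_t(x))Γ_t(x)`, `Γ_0 = 1`, with `B` holomorphic, over a
`T`-continuous semigroup of holomorphic self-mappings, is uniformly jointly
continuous. -/
theorem holomorphic_generated_semicocycle_is_UJC
    {X A : Type*} [NormedAddCommGroup X] [NormedSpace ℂ X] [CompleteSpace X]
    [NormedRing A] [NormedAlgebra ℂ A] [CompleteSpace A] [NormOneClass A]
    (D : Set X) (hDo : IsOpen D) (hDc : IsConnected D) (hDb : Bornology.IsBounded D)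
    (F : ℝ → X → X)
    (hFmaps : ∀ t ≥ (0:ℝ), Set.MapsTo (F t) D D)
    (hFhol : ∀ t ≥ (0:ℝ), DifferentiableOn ℂ (F t) D)
    (hFsg : ∀ t ≥ (0:ℝ), ∀ s ≥ (0:ℝ), ∀ x ∈ D, F (t + s) x = F t (F s x))
    (hFid : ∀ x ∈ D, F 0 x = x)
    (hF0 : ∀ x ∈ D, Tendsto (fun t => F t x) (𝓝[>] (0:ℝ)) (𝓝 x))
    -- `T`-continuity of the semigroup:
    (hFT : ∀ t0 ≥ (0:ℝ), ∀ S : Set X, StrictlyInside D S →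
      TendstoUniformlyOn (fun t x => F t x) (F t0) (𝓝[Set.Ici (0:ℝ)] t0) S)
    (B : X → A) (hB : DifferentiableOn ℂ B D)
    (Γ : ℝ → X → A)
    (hΓ0 : ∀ x ∈ D, Γ 0 x = 1)
    (hΓd : ∀ x ∈ D, ∀ t ≥ (0:ℝ),
      HasDerivWithinAt (fun r => Γ r x) (B (F t x) * Γ t x) (Set.Ici (0:ℝ)) t) :
    ∀ t0 ≥ (0:ℝ), ∀ x0 ∈ D, ∃ U ∈ 𝓝 x0, U ⊆ D ∧
      TendstoUniformlyOn (fun t x => Γ t x) (Γ t0) (𝓝[Set.Ici (0:ℝ)] t0) U := by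
  intro t0 ht0 x0 hx0
  set T : ℝ := t0 + 1 with hTdef
  have hT0 : (0:ℝ) ≤ T := by simp only [hTdef]; linarith
  -- Key step: a uniform bound on `B ∘ F` near `x0` over the time window `[0, T]`.
  have key : ∃ r > 0, ∃ M : ℝ, ball x0 r ⊆ D ∧
      ∀ s ∈ Icc (0:ℝ) T, ∀ x ∈ ball x0 r, F s x ∈ D ∧ ‖B (F s x)‖ ≤ M := by
    by_cases hcompl : Dᶜ.Nonempty
    · -- main case: `D` has nonempty complement
      have hclosed : IsClosed Dᶜ := hDo.isClosed_compl
      have hd0 : 0 < infDist x0 Dᶜ :=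
        (hclosed.notMem_iff_infDist_pos hcompl).1 (by simpa using hx0)
      set r0 : ℝ := infDist x0 Dᶜ / 2 with hr0def
      have hr0pos : 0 < r0 := by positivity
      have hlow : ∀ x ∈ closedBall x0 r0, r0 ≤ infDist x Dᶜ := by
        intro x hx
        have h1 : infDist x0 Dᶜ ≤ infDist x Dᶜ + dist x0 x := infDist_le_infDist_add_dist
        have h2 : dist x0 x ≤ r0 := by
          rw [dist_comm]; exact mem_closedBall.1 hx
        rw [hr0def] at *; linarith
      have hSD : closedBall x0 r0 ⊆ D := by
        intro x hx
        by_contra hxD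
        have : infDist x Dᶜ = 0 := infDist_zero_of_mem hxD
        have := hlow x hx
        linarith
      have hSI : StrictlyInside D (closedBall x0 r0) :=
        ⟨hSD, isBounded_closedBall, ⟨r0, hr0pos, hlow⟩⟩
      -- joint continuity with a bound on `B` near each point of the trajectory
      have cover : ∀ t ∈ Icc (0:ℝ) T, ∃ O : Set ℝ, IsOpen O ∧ t ∈ O ∧
          ∃ rt > 0, rt ≤ r0 ∧ ∃ Mt : ℝ, ∀ s ∈ O ∩ Ici (0:ℝ), ∀ x ∈ ball x0 rt,
            F s x ∈ D ∧ ‖B (F s x)‖ ≤ Mt := by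
        intro t ht
        have htn : (0:ℝ) ≤ t := ht.1
        have hyt : F t x0 ∈ D := hFmaps t htn hx0
        -- continuity of `B` at `F t x0`
        have hBc : ContinuousAt B (F t x0) :=
          ((hB _ hyt).differentiableAt (hDo.mem_nhds hyt)).continuousAt
        obtain ⟨δ1, hδ1, hδ1B⟩ := Metric.continuousAt_iff.1 hBc 1 one_pos
        obtain ⟨δ2, hδ2, hδ2D⟩ := Metric.isOpen_iff.1 hDo _ hyt
        set δt : ℝ := min δ1 δ2 with hδtdef
        have hδtpos : 0 < δt := lt_min hδ1 hδ2
        -- T-continuity at `t` on the closed ball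
        have hTU := Metric.tendstoUniformlyOn_iff.1 (hFT t htn _ hSI) (δt / 2) (by positivity)
        obtain ⟨O1, hO1open, htO1, hO1⟩ := mem_nhdsWithin.1 hTU
        -- continuity of `F t` at `x0`
        have hFc : ContinuousAt (F t) x0 :=
          ((hFhol t htn _ hx0).differentiableAt (hDo.mem_nhds hx0)).continuousAt
        obtain ⟨r1, hr1, hr1F⟩ := Metric.continuousAt_iff.1 hFc (δt / 2) (by positivity)
        refine ⟨O1, hO1open, htO1, min r1 r0, lt_min hr1 hr0pos, min_le_right _ _,
          ‖B (F t x0)‖ + 1, ?_⟩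
        intro s hs x hx
        have hxS : x ∈ closedBall x0 r0 :=
          ball_subset_closedBall (ball_subset_ball (min_le_right _ _) hx)
        have h1 : dist (F t x) (F s x) < δt / 2 := hO1 hs x hxS
        have h2 : dist (F t x) (F t x0) < δt / 2 :=
          hr1F (mem_ball.1 (ball_subset_ball (min_le_left _ _) hx))
        have h3 : dist (F s x) (F t x0) < δt :=
          calc dist (F s x) (F t x0) ≤ dist (F s x) (F t x) + dist (F t x) (F t x0) :=
                dist_triangle _ _ _
            _ < δt / 2 + δt / 2 := by
                rw [dist_comm (F s x) (F t x)]; exact add_lt_add h1 h2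
            _ = δt := by ring
        constructor
        · exact hδ2D (mem_ball.2 (lt_of_lt_of_le h3 (min_le_right _ _)))
        · have hB1 : dist (B (F s x)) (B (F t x0)) < 1 :=
            hδ1B (lt_of_lt_of_le h3 (min_le_left _ _))
          rw [dist_eq_norm] at hB1
          calc ‖B (F s x)‖ ≤ ‖B (F s x) - B (F t x0)‖ + ‖B (F t x0)‖ := by
                have := norm_add_le (B (F s x) - B (F t x0)) (B (F t x0))
                simpa using this
            _ ≤ ‖B (F t x0)‖ + 1 := by linarith
      choose! O hOopen hOmem r hrpos hrle M hmain using cover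
      obtain ⟨τ, hτsub, hτcov⟩ := (isCompact_Icc (a := (0:ℝ)) (b := T)).elim_nhds_subcover O
        (fun t ht => (hOopen t ht).mem_nhds (hOmem t ht))
      have h0mem : (0:ℝ) ∈ Icc (0:ℝ) T := ⟨le_refl _, hT0⟩
      have hτne : τ.Nonempty := by
        obtain ⟨i, hi, -⟩ := mem_iUnion₂.1 (hτcov h0mem)
        exact ⟨i, hi⟩
      set rmin : ℝ := τ.inf' hτne r with hrmindef
      set Mmax : ℝ := τ.sup' hτne M with hMmaxdef
      have hrminpos : 0 < rmin := by
        rw [hrmindef, Finset.lt_inf'_iff]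
        intro i hi; exact hrpos i (hτsub i hi)
      have hrminle : rmin ≤ r0 := by
        obtain ⟨i, hi⟩ := hτne
        exact le_trans (Finset.inf'_le _ hi) (hrle i (hτsub i hi))
      refine ⟨rmin, hrminpos, Mmax, ?_, ?_⟩
      · exact fun x hx => hSD (ball_subset_closedBall
          (ball_subset_ball hrminle hx))
      · intro s hs x hx
        obtain ⟨i, hi, hsi⟩ := mem_iUnion₂.1 (hτcov hs)
        have hxri : x ∈ ball x0 (r i) := ball_subset_ball (Finset.inf'_le _ hi) hx
        have := hmain i (hτsub i hi) s ⟨hsi, hs.1⟩ x hxri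
        exact ⟨this.1, le_trans this.2 (Finset.le_sup' _ hi)⟩
    · -- degenerate case: `D = univ`, so `X` is bounded, hence trivial
      have hDuniv : D = univ := by
        rw [Set.not_nonempty_iff_eq_empty, compl_empty_iff] at hcompl
        exact hcompl
      obtain ⟨Cb, hCb⟩ := isBounded_iff_forall_norm_le.1 hDb
      have hCb0 : (0:ℝ) ≤ Cb := le_trans (norm_nonneg x0) (hCb x0 hx0)
      have hzero : ∀ x : X, x = 0 := by
        intro x
        by_contra hx
        have hxn : (0:ℝ) < ‖x‖ := norm_pos_iff.2 hx
        have hmem : (((Cb + 1) / ‖x‖ : ℝ) : ℂ) • x ∈ D := by rw [hDuniv]; trivial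
        have := hCb _ hmem
        rw [norm_smul] at this
        have hcn : ‖(((Cb + 1) / ‖x‖ : ℝ) : ℂ)‖ = (Cb + 1) / ‖x‖ := by
          rw [Complex.norm_real, Real.norm_eq_abs, abs_of_nonneg (by positivity)]
        rw [hcn, div_mul_cancel₀ _ (ne_of_gt hxn)] at this
        linarith
      refine ⟨1, one_pos, ‖B x0‖, by rw [hDuniv]; exact subset_univ _, ?_⟩
      intro s hs x hx
      have : F s x = x0 := by rw [hzero (F s x), hzero x0]
      rw [this]
      exact ⟨by rw [hDuniv]; trivial, le_refl _⟩
  obtain ⟨r, hrpos, M, hUD, hM⟩ := key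
  have hx0U : x0 ∈ ball x0 r := mem_ball_self hrpos
  have hM0 : 0 ≤ M := le_trans (norm_nonneg _) ((hM 0 ⟨le_refl _, hT0⟩ x0 hx0U).2)
  set C : ℝ := Real.exp (M * T) with hCdef
  have hC0 : 0 < C := Real.exp_pos _
  -- Gronwall bound: ‖Γ s x‖ ≤ C on [0, T] × ball
  have hΓbound : ∀ x ∈ ball x0 r, ∀ s ∈ Icc (0:ℝ) T, ‖Γ s x‖ ≤ C := by
    intro x hx s hs
    have hxD : x ∈ D := hUD hx
    have hgron := norm_le_gronwallBound_of_norm_deriv_right_le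
      (f := fun s => Γ s x) (f' := fun s => B (F s x) * Γ s x)
      (δ := 1) (K := M) (ε := 0) (a := 0) (b := T)
      (fun u hu => ((hΓd x hxD u hu.1).continuousWithinAt).mono Icc_subset_Ici_self)
      (fun u hu => (hΓd x hxD u hu.1).mono (Ici_subset_Ici.2 hu.1))
      (by show ‖Γ 0 x‖ ≤ 1; rw [hΓ0 x hxD, norm_one])
      (fun u hu => by
        have h1 : ‖B (F u x) * Γ u x‖ ≤ ‖B (F u x)‖ * ‖Γ u x‖ := norm_mul_le _ _
        have h2 : ‖B (F u x)‖ ≤ M := (hM u ⟨hu.1, le_of_lt hu.2⟩ x hx).2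
        have h3 : ‖B (F u x)‖ * ‖Γ u x‖ ≤ M * ‖Γ u x‖ :=
          mul_le_mul_of_nonneg_right h2 (norm_nonneg _)
        simpa using le_trans h1 h3)
      s hs
    rw [gronwallBound_ε0, one_mul, sub_zero] at hgron
    exact le_trans hgron (Real.exp_le_exp.2 (mul_le_mul_of_nonneg_left hs.2 hM0))
  -- Lipschitz estimate in time, uniform in `x`
  have hLip : ∀ x ∈ ball x0 r, ∀ s ∈ Icc (0:ℝ) T, ∀ s' ∈ Icc (0:ℝ) T,
      ‖Γ s' x - Γ s x‖ ≤ M * C * ‖s' - s‖ := by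
    intro x hx s hs s' hs'
    have hxD : x ∈ D := hUD hx
    exact Convex.norm_image_sub_le_of_norm_hasDerivWithin_le
      (f := fun s => Γ s x) (f' := fun s => B (F s x) * Γ s x) (s := Icc (0:ℝ) T)
      (fun u hu => (hΓd x hxD u hu.1).mono Icc_subset_Ici_self)
      (fun u hu => by
        have h1 : ‖B (F u x) * Γ u x‖ ≤ ‖B (F u x)‖ * ‖Γ u x‖ := norm_mul_le _ _
        have h2 : ‖B (F u x)‖ ≤ M := (hM u hu x hx).2
        have h3 : ‖Γ u x‖ ≤ C := hΓbound x hx u hu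
        calc ‖B (F u x) * Γ u x‖ ≤ ‖B (F u x)‖ * ‖Γ u x‖ := h1
          _ ≤ M * C := mul_le_mul h2 h3 (norm_nonneg _) hM0)
      (convex_Icc _ _) hs hs'
  refine ⟨ball x0 r, ball_mem_nhds _ hrpos, hUD, ?_⟩
  rw [Metric.tendstoUniformlyOn_iff]
  intro ε hε
  set L : ℝ := M * C with hLdef
  have hL0 : 0 ≤ L := mul_nonneg hM0 (le_of_lt hC0)
  set η : ℝ := min 1 (ε / (L + 1)) with hηdef
  have hηpos : 0 < η := lt_min one_pos (by positivity)
  have hmem : Ici (0:ℝ) ∩ ball t0 η ∈ 𝓝[Ici (0:ℝ)] t0 :=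
    inter_mem_nhdsWithin _ (ball_mem_nhds _ hηpos)
  filter_upwards [hmem] with t ht
  intro x hx
  have ht0' : (0:ℝ) ≤ t := ht.1
  have htd : |t - t0| < η := by
    have := mem_ball.1 ht.2
    rwa [Real.dist_eq] at this
  have htT : t ≤ T := by
    have h1 : t - t0 ≤ |t - t0| := le_abs_self _
    have h2 : η ≤ 1 := min_le_left _ _
    simp only [hTdef]; linarith
  have ht0T : t0 ∈ Icc (0:ℝ) T := ⟨ht0, by simp only [hTdef]; linarith⟩
  have htmem : t ∈ Icc (0:ℝ) T := ⟨ht0', htT⟩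
  have hd := hLip x hx t htmem t0 ht0T
  rw [dist_eq_norm]
  have habs : ‖t0 - t‖ ≤ η := by
    rw [Real.norm_eq_abs, abs_sub_comm]
    exact le_of_lt htd
  calc ‖Γ t0 x - Γ t x‖ ≤ L * ‖t0 - t‖ := hd
    _ ≤ L * η := mul_le_mul_of_nonneg_left habs hL0
    _ ≤ L * (ε / (L + 1)) := mul_le_mul_of_nonneg_left (min_le_right _ _) hL0
    _ < ε := by
        rw [← mul_div_assoc, div_lt_iff₀ (by linarith : (0:ℝ) < L + 1)]
        nlinarith
  -- done
end

section
/- Let X = ℓ¹ and define on the open unit ball D the semigroup F_t(x) = (e^{-kt} x_k)_{k≥1} and Γ_t(x) = exp(Σ_{k≥1} x_k(1 − e^{-kt})). Then {Γ_t}_{t≥0} is a (complex-valued) semicocycle over F (the chain rule Γ_t(F_s(x))Γ_s(x) = Γ_{t+s}(x) holds and Γ_t(x) → 1 as t → 0⁺ pointwise), but it is not uniformly jointly continuous: for every x ∈ D and every neighborhood U of x, the convergence Γ_t → 1 as t → 0⁺ fails to be uniform on U. -/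
open Filter Metric Set Topology

noncomputable section

/-- The semigroup `F_t(x) = (e^{-kt} x_k)_{k≥1}` on `ℓ¹` (here indexed by `ℕ`, with
`k`-th coordinate multiplied by `e^{-(k+1)t}`; for `t < 0` we use `max t 0`). -/
def Fl1 (t : ℝ) (x : lp (fun _ : ℕ => ℂ) 1) : lp (fun _ : ℕ => ℂ) 1 :=
  ⟨fun k => (Real.exp (-((k : ℝ) + 1) * max t 0) : ℂ) * x k, by
    apply memℓp_gen
    have hs : Summable fun k : ℕ => ‖x k‖ ^ (1 : ENNReal).toReal :=
      (lp.memℓp x).summable (by norm_num)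
    apply hs.of_nonneg_of_le (fun k => by positivity)
    intro k
    simp only [ENNReal.toReal_one, Real.rpow_one, norm_mul]
    have h1 : ‖((Real.exp (-((k : ℝ) + 1) * max t 0) : ℝ) : ℂ)‖ ≤ 1 := by
      rw [Complex.norm_real, Real.norm_eq_abs, abs_of_pos (Real.exp_pos _)]
      apply Real.exp_le_one_iff.mpr
      have : (0:ℝ) ≤ ((k : ℝ) + 1) * max t 0 := by positivity
      linarith
    calc ‖((Real.exp (-((k : ℝ) + 1) * max t 0) : ℝ) : ℂ)‖ * ‖x k‖
        ≤ 1 * ‖x k‖ := by gcongr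
      _ = ‖x k‖ := one_mul _⟩

/-- The semicocycle `Γ_t(x) = exp (Σ_k x_k (1 − e^{-kt}))`. -/
def Gl1 (t : ℝ) (x : lp (fun _ : ℕ => ℂ) 1) : ℂ :=
  Complex.exp (∑' k : ℕ, x k * (1 - (Real.exp (-((k : ℝ) + 1) * max t 0) : ℂ)))

private def gfun (k : ℕ) (t : ℝ) : ℂ := 1 - (Real.exp (-((k : ℝ) + 1) * max t 0) : ℂ)

private lemma gfun_norm_le (k : ℕ) (t : ℝ) : ‖gfun k t‖ ≤ 1 := by
  have h0 : (0:ℝ) ≤ ((k:ℝ)+1) * max t 0 := by positivity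
  have h1 : Real.exp (-(((k:ℝ)+1) * max t 0)) ≤ 1 := Real.exp_le_one_iff.mpr (by linarith)
  have h2 : 0 < Real.exp (-(((k:ℝ)+1) * max t 0)) := Real.exp_pos _
  have heq : gfun k t = ((1 - Real.exp (-(((k:ℝ)+1) * max t 0)) : ℝ) : ℂ) := by
    simp only [gfun, neg_mul, Complex.ofReal_exp, Complex.ofReal_neg, Complex.ofReal_mul]
    push_cast
    ring_nf
  rw [heq, Complex.norm_real, Real.norm_eq_abs, abs_of_nonneg (by linarith)]
  linarith

private lemma summ (x : lp (fun _ : ℕ => ℂ) 1) (t : ℝ) :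
    Summable (fun k : ℕ => x k * gfun k t) := by
  have hs : Summable fun k : ℕ => ‖x k‖ := by
    have := (lp.memℓp x).summable (p := 1) (by norm_num)
    simpa using this
  apply Summable.of_norm
  apply hs.of_nonneg_of_le (fun k => norm_nonneg _)
  intro k
  rw [norm_mul]
  calc ‖x k‖ * ‖gfun k t‖ ≤ ‖x k‖ * 1 := by gcongr; exact gfun_norm_le k t
    _ = ‖x k‖ := mul_one _

private def Sfun (x : lp (fun _ : ℕ => ℂ) 1) (t : ℝ) : ℂ := ∑' k : ℕ, x k * gfun k t

private lemma Gl1_eq (t : ℝ) (x : lp (fun _ : ℕ => ℂ) 1) :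
    Gl1 t x = Complex.exp (Sfun x t) := rfl

private lemma contS (x : lp (fun _ : ℕ => ℂ) 1) : Continuous (Sfun x) := by
  apply continuous_tsum (u := fun k => ‖x k‖)
  · intro k
    unfold gfun
    fun_prop
  · have := (lp.memℓp x).summable (p := 1) (by norm_num)
    simpa using this
  · intro k t
    rw [norm_mul]
    calc ‖x k‖ * ‖gfun k t‖ ≤ ‖x k‖ * 1 := by gcongr; exact gfun_norm_le k t
      _ = ‖x k‖ := mul_one _

private lemma Sfun_zero (x : lp (fun _ : ℕ => ℂ) 1) : Sfun x 0 = 0 := by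
  unfold Sfun gfun
  simp

/-- On the open unit ball `D` of `ℓ¹`, the family `Γ_t` is a semicocycle over `F`, but
it is not uniformly jointly continuous at `t = 0` at any point of `D`. -/
theorem ell1_semicocycle_not_UJC :
    (∀ t ≥ (0:ℝ), ∀ s ≥ (0:ℝ), ∀ x : lp (fun _ : ℕ => ℂ) 1, ‖x‖ < 1 →
        Gl1 t (Fl1 s x) * Gl1 s x = Gl1 (t + s) x) ∧
    (∀ x : lp (fun _ : ℕ => ℂ) 1, ‖x‖ < 1 →
        Tendsto (fun t => Gl1 t x) (𝓝[>] (0:ℝ)) (𝓝 1)) ∧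
    (∀ x : lp (fun _ : ℕ => ℂ) 1, ‖x‖ < 1 → ∀ U ∈ 𝓝 x,
        ¬ TendstoUniformlyOn (fun t y => Gl1 t y) (fun _ => (1:ℂ)) (𝓝[>] (0:ℝ))
          (U ∩ {y : lp (fun _ : ℕ => ℂ) 1 | ‖y‖ < 1})) := by
  refine ⟨?_, ?_, ?_⟩
  · -- chain rule
    intro t ht s hs x hx
    rw [Gl1_eq, Gl1_eq, Gl1_eq, ← Complex.exp_add]
    congr 1
    have hmt : max t 0 = t := max_eq_left ht
    have hms : max s 0 = s := max_eq_left hs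
    have hmts : max (t + s) 0 = t + s := max_eq_left (by linarith)
    have h1 := summ (Fl1 s x) t
    have h2 := summ x s
    unfold Sfun
    rw [← Summable.tsum_add h1 h2]
    apply tsum_congr
    intro k
    have hF : (Fl1 s x) k = (Real.exp (-((k : ℝ) + 1) * max s 0) : ℂ) * x k := rfl
    rw [hF]
    unfold gfun
    rw [hmt, hms, hmts]
    have key : (Real.exp (-((k:ℝ)+1) * s) : ℂ) * (Real.exp (-((k:ℝ)+1) * t) : ℂ)
        = (Real.exp (-((k:ℝ)+1) * (t+s)) : ℂ) := by
      rw [← Complex.ofReal_mul, ← Real.exp_add]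
      norm_num
      ring_nf
    linear_combination (-(x k)) * key
  · -- pointwise limit
    intro x hx
    have hc : Tendsto (fun t => Gl1 t x) (𝓝 0) (𝓝 1) := by
      have h := (Complex.continuous_exp.comp (contS x)).tendsto 0
      simp only [Function.comp, Sfun_zero, Complex.exp_zero] at h
      exact h
    exact hc.mono_left nhdsWithin_le_nhds
  · -- not UJC
    intro x hx U hU hcontra
    obtain ⟨r, hr, hball⟩ := Metric.mem_nhds_iff.mp hU
    set c : ℝ := min r (1 - ‖x‖) / 2 with hcdef
    have hc0 : 0 < c := by
      have : 0 < 1 - ‖x‖ := by linarith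
      have : 0 < min r (1 - ‖x‖) := lt_min hr this
      positivity
    have hcr : c < r := by
      have h1 : min r (1 - ‖x‖) ≤ r := min_le_left _ _
      have : 0 < min r (1 - ‖x‖) := by
        have : 0 < 1 - ‖x‖ := by linarith
        exact lt_min hr this
      rw [hcdef]; linarith
    have hc1 : ‖x‖ + c < 1 := by
      have h1 : min r (1 - ‖x‖) ≤ 1 - ‖x‖ := min_le_right _ _
      have h2 : 0 < 1 - ‖x‖ := by linarith
      rw [hcdef]; linarith
    set y : ℕ → lp (fun _ : ℕ => ℂ) 1 := fun n => x + lp.single (E := fun _ : ℕ => ℂ) 1 n ((c : ℂ)) with hydef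
    have hsingle_norm : ∀ n : ℕ, ‖lp.single (E := fun _ : ℕ => ℂ) 1 n ((c : ℂ))‖ = c := by
      intro n
      have := lp.norm_single (E := fun _ : ℕ => ℂ) (p := 1) (by norm_num) n (c : ℂ)
      rw [this, Complex.norm_real, Real.norm_eq_abs, abs_of_pos hc0]
    have hymem : ∀ n, y n ∈ U ∩ {y : lp (fun _ : ℕ => ℂ) 1 | ‖y‖ < 1} := by
      intro n
      constructor
      · apply hball
        rw [Metric.mem_ball, dist_eq_norm]
        have : y n - x = lp.single (E := fun _ : ℕ => ℂ) 1 n ((c : ℂ)) := by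
          rw [hydef]; exact add_sub_cancel_left x _
        rw [this, hsingle_norm]
        exact hcr
      · have : ‖y n‖ ≤ ‖x‖ + c := by
          rw [hydef]
          calc ‖x + lp.single (E := fun _ : ℕ => ℂ) 1 n ((c:ℂ))‖ ≤ ‖x‖ + ‖lp.single (E := fun _ : ℕ => ℂ) 1 n ((c:ℂ))‖ := norm_add_le _ _
            _ = ‖x‖ + c := by rw [hsingle_norm]
        exact lt_of_le_of_lt this hc1
    set tn : ℕ → ℝ := fun n => 1 / ((n : ℝ) + 1) with htndef
    have htn_pos : ∀ n, 0 < tn n := fun n => by positivity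
    have htn : Tendsto tn atTop (𝓝[>] (0:ℝ)) :=
      tendsto_nhdsWithin_of_tendsto_nhds_of_eventually_within _
        tendsto_one_div_add_atTop_nhds_zero_nat (Eventually.of_forall fun n => htn_pos n)
    -- value of Gl1 (tn n) (y n)
    have hval : ∀ n, Gl1 (tn n) (y n)
        = Complex.exp (Sfun x (tn n) + (c : ℂ) * (1 - (Real.exp (-1) : ℂ))) := by
      intro n
      rw [Gl1_eq]
      congr 1
      unfold Sfun
      have hcoe : ∀ k, (y n) k = x k + (lp.single (E := fun _ : ℕ => ℂ) 1 n ((c:ℂ))) k := by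
        intro k
        rw [hydef]
        simp [lp.coeFn_add]
      have hsum2 : Summable (fun k : ℕ => (lp.single (E := fun _ : ℕ => ℂ) 1 n ((c:ℂ))) k * gfun k (tn n)) :=
        summ _ _
      calc (∑' k : ℕ, (y n) k * gfun k (tn n))
          = ∑' k : ℕ, (x k * gfun k (tn n) + (lp.single (E := fun _ : ℕ => ℂ) 1 n ((c:ℂ))) k * gfun k (tn n)) := by
            apply tsum_congr; intro k; rw [hcoe k]; ring
        _ = (∑' k : ℕ, x k * gfun k (tn n)) + ∑' k : ℕ, (lp.single (E := fun _ : ℕ => ℂ) 1 n ((c:ℂ))) k * gfun k (tn n) :=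
            Summable.tsum_add (summ x (tn n)) hsum2
        _ = Sfun x (tn n) + (c : ℂ) * (1 - (Real.exp (-1) : ℂ)) := by
            congr 1
            rw [tsum_eq_single n]
            · rw [lp.single_apply_self]
              congr 1
              unfold gfun
              have hmax : max (tn n) 0 = tn n := max_eq_left (htn_pos n).le
              rw [hmax]
              congr 2
              rw [htndef]
              push_cast
              field_simp
            · intro k hk
              rw [lp.single_apply_ne (E := fun _ : ℕ => ℂ) 1 n _ hk, zero_mul]
    -- the limit L and its distance from 1
    set ε0 : ℝ := Real.exp (c * (1 - Real.exp (-1))) - 1 with hε0def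
    have hexp_pos : 0 < c * (1 - Real.exp (-1)) := by
      have : Real.exp (-1) < 1 := Real.exp_lt_one_iff.mpr (by norm_num)
      have h2 : 0 < 1 - Real.exp (-1) := by linarith
      positivity
    have hε0 : 0 < ε0 := by
      rw [hε0def]
      linarith [Real.one_lt_exp_iff.mpr hexp_pos]
    -- distance tends to ε0
    have hSlim : Tendsto (fun n => Sfun x (tn n)) atTop (𝓝 0) := by
      have := ((contS x).tendsto 0).comp (htn.mono_right nhdsWithin_le_nhds)
      rwa [Sfun_zero] at this
    have hdistlim : Tendsto (fun n => dist (1:ℂ) (Gl1 (tn n) (y n))) atTop (𝓝 ε0) := by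
      have h1 : Tendsto (fun n => Gl1 (tn n) (y n)) atTop
          (𝓝 (Complex.exp ((c : ℂ) * (1 - (Real.exp (-1) : ℂ))))) := by
        have := (Complex.continuous_exp.tendsto _).comp
          (hSlim.add_const ((c : ℂ) * (1 - (Real.exp (-1) : ℂ))))
        simp only [Function.comp, zero_add] at this
        convert this using 1
        funext n
        exact hval n
      have h2 : Tendsto (fun n => dist (1:ℂ) (Gl1 (tn n) (y n))) atTop
          (𝓝 (dist (1:ℂ) (Complex.exp ((c : ℂ) * (1 - (Real.exp (-1) : ℂ)))))) :=
        Tendsto.dist tendsto_const_nhds h1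
      convert h2 using 2
      rw [hε0def]
      have : Complex.exp ((c : ℂ) * (1 - (Real.exp (-1) : ℂ)))
          = ((Real.exp (c * (1 - Real.exp (-1))) : ℝ) : ℂ) := by
        rw [Complex.ofReal_exp]
        push_cast
        ring_nf
      rw [dist_eq_norm, this]
      have hge : (1:ℝ) ≤ Real.exp (c * (1 - Real.exp (-1))) :=
        Real.one_le_exp hexp_pos.le
      have : (1:ℂ) - ((Real.exp (c * (1 - Real.exp (-1))) : ℝ) : ℂ)
          = ((1 - Real.exp (c * (1 - Real.exp (-1))) : ℝ) : ℂ) := by push_cast; ring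
      rw [this, Complex.norm_real, Real.norm_eq_abs, abs_of_nonpos (by linarith)]
      ring
    rw [Metric.tendstoUniformlyOn_iff] at hcontra
    have hev1 : ∀ᶠ n in atTop, ∀ z ∈ U ∩ {y : lp (fun _ : ℕ => ℂ) 1 | ‖y‖ < 1},
        dist (1:ℂ) (Gl1 (tn n) z) < ε0 / 2 := htn.eventually (hcontra (ε0/2) (by positivity))
    have hev2 : ∀ᶠ n in atTop, ε0 / 2 < dist (1:ℂ) (Gl1 (tn n) (y n)) :=
      hdistlim.eventually (eventually_gt_nhds (by linarith))
    obtain ⟨n, h1, h2⟩ := (hev1.and hev2).exists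
    exact absurd (h1 (y n) (hymem n)) (not_lt.mpr h2.le)

end
end

section
/- Define on the interval D = (−1,1) the semigroup F_t(x) = e^{-t} x and Γ_t(x) = e^{-t} for |x| < 1/2; Γ_t(x) = 2|x| e^{-t} for 1/2 ≤ |x| < min{1, e^t/2}; Γ_t(x) = 1 otherwise. Then {Γ_t}_{t≥0} is a real-valued semicocycle over F, but for every x with |x| > 1/2 the function t ↦ Γ_t(x) is not differentiable at t = ln(2|x|). -/
open Filter Metric Set Topology

noncomputable section

/-- The piecewise-defined semicocycle from the example: `Γ_t(x) = e^{-t}` for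
`|x| < 1/2`; `Γ_t(x) = 2|x|e^{-t}` for `1/2 ≤ |x| < min{1, e^t/2}`; `Γ_t(x) = 1`
otherwise. -/
def G19 (t x : ℝ) : ℝ :=
  if |x| < 1 / 2 then Real.exp (-t)
  else if |x| < min 1 (Real.exp t / 2) then 2 * |x| * Real.exp (-t)
  else 1

lemma G19_lo {t x : ℝ} (h : |x| < 1 / 2) : G19 t x = Real.exp (-t) := if_pos h

lemma G19_mid {t x : ℝ} (h1 : ¬ |x| < 1 / 2) (h2 : |x| < 1) (h3 : |x| < Real.exp t / 2) :
    G19 t x = 2 * |x| * Real.exp (-t) := by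
  rw [G19, if_neg h1, if_pos (lt_min h2 h3)]

lemma G19_hi {t x : ℝ} (h1 : ¬ |x| < 1 / 2) (h3 : ¬ |x| < Real.exp t / 2) :
    G19 t x = 1 := by
  rw [G19, if_neg h1, if_neg]
  intro h
  exact h3 (lt_of_lt_of_le h (min_le_right _ _))

/-- On `D = (-1,1)` with the semigroup `F_t(x) = e^{-t}x`, the family `G19` is a
real-valued semicocycle over `F`, but for every `x` with `|x| > 1/2` the function
`t ↦ Γ_t(x)` is not differentiable at `t = ln(2|x|)`. -/
theorem piecewise_semicocycle_not_differentiable :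
    (∀ t ≥ (0:ℝ), ∀ s ≥ (0:ℝ), ∀ x ∈ Set.Ioo (-1:ℝ) 1,
        G19 t (Real.exp (-s) * x) * G19 s x = G19 (t + s) x) ∧
    (∀ x ∈ Set.Ioo (-1:ℝ) 1, Tendsto (fun t => G19 t x) (𝓝[>] (0:ℝ)) (𝓝 1)) ∧
    (∀ x : ℝ, 1 / 2 < |x| → |x| < 1 →
        ¬ DifferentiableAt ℝ (fun t => G19 t x) (Real.log (2 * |x|))) := by
  refine ⟨?_, ?_, ?_⟩
  · intro t ht s hs x hx
    have hx1 : |x| < 1 := abs_lt.mpr ⟨hx.1, hx.2⟩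
    have hesp : (0:ℝ) < Real.exp (-s) := Real.exp_pos _
    have hsp : (0:ℝ) < Real.exp s := Real.exp_pos _
    have htp : (0:ℝ) < Real.exp t := Real.exp_pos _
    have hmul : Real.exp (-s) * Real.exp s = 1 := by
      rw [← Real.exp_add]; simp
    have hes1 : Real.exp (-s) ≤ 1 := Real.exp_le_one_iff.mpr (by linarith)
    have hets : Real.exp s ≤ Real.exp (t + s) := Real.exp_le_exp.mpr (by linarith)
    have hets' : Real.exp (t + s) = Real.exp t * Real.exp s := Real.exp_add t s
    have hents : Real.exp (-(t + s)) = Real.exp (-t) * Real.exp (-s) := by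
      rw [← Real.exp_add]; ring_nf
    have habs : |Real.exp (-s) * x| = Real.exp (-s) * |x| := by
      rw [abs_mul, abs_of_pos hesp]
    by_cases h1 : |x| < 1 / 2
    · have h1' : Real.exp (-s) * |x| < 1 / 2 := by nlinarith
      rw [G19_lo h1, G19_lo (habs ▸ h1'), G19_lo h1, hents]
    · -- 1/2 ≤ |x| < 1
      by_cases h2 : |x| < Real.exp s / 2
      · -- middle case for s
        have h2' : Real.exp (-s) * |x| < 1 / 2 := by nlinarith
        have h2'' : |x| < Real.exp (t + s) / 2 := by nlinarith
        rw [G19_lo (habs ▸ h2'), G19_mid h1 hx1 h2, G19_mid h1 hx1 h2'', hents]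
        ring
      · -- |x| ≥ exp s / 2, so G19 s x = 1
        have h2' : ¬ Real.exp (-s) * |x| < 1 / 2 := by
          push_neg at h2 ⊢; nlinarith
        have h2'' : ¬ |Real.exp (-s) * x| < 1 / 2 := habs ▸ h2'
        have hy1 : |Real.exp (-s) * x| < 1 := by rw [habs]; nlinarith
        rw [G19_hi h1 h2]
        by_cases h3 : |x| < Real.exp (t + s) / 2
        · have h3' : |Real.exp (-s) * x| < Real.exp t / 2 := by
            rw [habs]; rw [hets'] at h3; nlinarith
          rw [G19_mid h2'' hy1 h3', G19_mid h1 hx1 h3, habs, hents]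
          ring
        · have h3' : ¬ |Real.exp (-s) * x| < Real.exp t / 2 := by
            rw [habs]; push_neg at h3 ⊢; rw [hets'] at h3; nlinarith
          rw [G19_hi h2'' h3', G19_hi h1 h3, mul_one]
  · intro x hx
    have hx1 : |x| < 1 := abs_lt.mpr ⟨hx.1, hx.2⟩
    rcases lt_trichotomy |x| (1/2) with h | h | h
    · have : (fun t : ℝ => G19 t x) = fun t => Real.exp (-t) := by
        funext t; exact G19_lo h
      rw [this]
      have : Tendsto (fun t : ℝ => Real.exp (-t)) (𝓝 (0:ℝ)) (𝓝 1) := by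
        have := (Real.continuous_exp.comp continuous_neg).tendsto (0:ℝ)
        simpa [Function.comp_def] using this
      exact this.mono_left nhdsWithin_le_nhds
    · -- |x| = 1/2
      have hev : ∀ᶠ t in 𝓝[>] (0:ℝ), G19 t x = 2 * |x| * Real.exp (-t) := by
        filter_upwards [self_mem_nhdsWithin] with t ht
        have htp : (0:ℝ) < t := ht
        have : (1:ℝ) < Real.exp t := by nlinarith [Real.add_one_le_exp t]
        exact G19_mid (by rw [h]; simp) hx1 (by rw [h]; linarith)
      have hlim : Tendsto (fun t : ℝ => 2 * |x| * Real.exp (-t)) (𝓝[>] (0:ℝ)) (𝓝 1) := by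
        have h1 : Tendsto (fun t : ℝ => 2 * |x| * Real.exp (-t)) (𝓝 (0:ℝ))
            (𝓝 (2 * |x| * Real.exp (-0))) :=
          (continuous_const.mul (Real.continuous_exp.comp continuous_neg)).tendsto 0
        have h2 : 2 * |x| * Real.exp (-0) = 1 := by rw [h]; simp
        rw [h2] at h1
        exact h1.mono_left nhdsWithin_le_nhds
      exact Filter.Tendsto.congr' (hev.mono fun t ht => ht.symm) hlim
    · -- |x| > 1/2
      have h2x : (1:ℝ) < 2 * |x| := by linarith
      have ht0 : 0 < Real.log (2 * |x|) := Real.log_pos h2x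
      have het0 : Real.exp (Real.log (2 * |x|)) = 2 * |x| := Real.exp_log (by linarith)
      have hev : ∀ᶠ t in 𝓝[>] (0:ℝ), G19 t x = 1 := by
        have hmem : Set.Ioo (0:ℝ) (Real.log (2*|x|)) ∈ 𝓝[>] (0:ℝ) :=
          Ioo_mem_nhdsGT_of_mem ⟨le_refl _, ht0⟩
        filter_upwards [hmem] with t hmt
        have : Real.exp t < 2 * |x| := by
          rw [← het0]; exact Real.exp_lt_exp.mpr hmt.2
        exact G19_hi (by linarith) (by push_neg; linarith)
      exact Filter.Tendsto.congr' (hev.mono fun t ht => ht.symm) tendsto_const_nhds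
  · intro x h12 hx1 hd
    set a := |x| with ha
    set t0 := Real.log (2 * a) with ht0def
    have hapos : (0:ℝ) < a := by linarith
    have h2a : (1:ℝ) < 2 * a := by linarith
    have het0 : Real.exp t0 = 2 * a := Real.exp_log (by linarith)
    set f : ℝ → ℝ := fun t => G19 t x with hf
    -- f = 1 on Iic t0
    have hEq1 : ∀ t ∈ Set.Iic t0, f t = 1 := by
      intro t htle
      have : Real.exp t ≤ 2 * a := by rw [← het0]; exact Real.exp_le_exp.mpr htle
      exact G19_hi (by push_neg; linarith) (by push_neg; linarith)
    -- f = 2a * exp(-t) on Ici t0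
    have hEq2 : ∀ t ∈ Set.Ici t0, f t = 2 * a * Real.exp (-t) := by
      intro t htge
      rcases eq_or_lt_of_le (Set.mem_Ici.mp htge) with heq | hlt
      · rw [← heq]
        have : Real.exp (-t0) = (2 * a)⁻¹ := by
          rw [Real.exp_neg, het0]
        rw [hEq1 t0 Set.self_mem_Iic, this]
        field_simp
      · have : 2 * a < Real.exp t := by rw [← het0]; exact Real.exp_lt_exp.mpr hlt
        exact G19_mid (by push_neg; linarith) hx1 (by linarith)
    have hft0 : f t0 = 1 := hEq1 t0 Set.self_mem_Iic
    have hD := hd.hasDerivAt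
    -- derivative from the left is 0
    have hL : HasDerivWithinAt f 0 (Set.Iic t0) t0 :=
      (hasDerivWithinAt_const t0 _ (1:ℝ)).congr hEq1 hft0
    have hL' : HasDerivWithinAt f (deriv f t0) (Set.Iic t0) t0 := hD.hasDerivWithinAt
    have hudL : UniqueDiffWithinAt ℝ (Set.Iic t0) t0 := uniqueDiffOn_Iic t0 t0 Set.self_mem_Iic
    have hzero : deriv f t0 = 0 := by
      rw [← hL'.derivWithin hudL, hL.derivWithin hudL]
    -- derivative from the right is -1
    have hg : HasDerivAt (fun t => 2 * a * Real.exp (-t)) (-1) t0 := by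
      have h1 : HasDerivAt (fun t : ℝ => Real.exp (-t)) (Real.exp (-t0) * (-1)) t0 :=
        (Real.hasDerivAt_exp (-t0)).comp t0 (hasDerivAt_neg t0)
      have h2 := h1.const_mul (2 * a)
      refine h2.congr_deriv ?_
      rw [Real.exp_neg, het0]
      field_simp
    have hR : HasDerivWithinAt f (-1) (Set.Ici t0) t0 :=
      (hg.hasDerivWithinAt).congr hEq2 (hEq2 t0 Set.self_mem_Ici)
    have hR' : HasDerivWithinAt f (deriv f t0) (Set.Ici t0) t0 := hD.hasDerivWithinAt
    have hudR : UniqueDiffWithinAt ℝ (Set.Ici t0) t0 := uniqueDiffOn_Ici t0 t0 Set.self_mem_Ici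
    have hmone : deriv f t0 = -1 := by
      rw [← hR'.derivWithin hudR, hR.derivWithin hudR]
    rw [hzero] at hmone
    norm_num at hmone

end
end
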